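/- arXiv:1808.06454 — 3 statements merged into one kernel-verified Lean document; each statement's English description precedes it below -/
import Mathlib

section
/- Let M be a convex body in ℝ² whose support function h = h(·,M) is twice continuously differentiable (as a 2π-periodic function). Then for every θ ∈ ℝ, Ex(θ,M) = 2·vol(M) + (1/2)∫_0^{2π} ( h(ω+θ+π) + h(ω−θ+π) ) ( h(ω) + h''(ω) ) dω. -/
open MeasureTheory Real

noncomputable section

abbrev E2 := EuclideanSpace ℝ (Fin 2)

/-- The unit vector at angle `θ`. -/
def uvec (θ : ℝ) : E2 := (WithLp.equiv 2 (Fin 2 → ℝ)).symm ![Real.cos θ, Real.sin θ]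

/-- Rotation of the plane by angle `θ`. -/
def rot (θ : ℝ) (x : E2) : E2 :=
  (WithLp.equiv 2 (Fin 2 → ℝ)).symm
    ![Real.cos θ * x 0 - Real.sin θ * x 1, Real.sin θ * x 0 + Real.cos θ * x 1]

/-- The support function of a set `M ⊆ ℝ²`, as a function of the angle `θ`. -/
def supp (M : Set E2) (θ : ℝ) : ℝ := sSup ((fun x : E2 => (inner ℝ x (uvec θ) : ℝ)) '' M)

/-- The excluded area function: the area of the difference body `M - R_θ M`. -/
def Ex (θ : ℝ) (M : Set E2) : ℝ :=
  (volume {p : E2 | ∃ x ∈ M, ∃ y ∈ M, p = x - rot θ y}).toReal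

open Set Function

lemma uvec_apply0 (θ : ℝ) : uvec θ 0 = Real.cos θ := rfl
lemma uvec_apply1 (θ : ℝ) : uvec θ 1 = Real.sin θ := rfl

lemma inner_uvec (x : E2) (θ : ℝ) :
    (inner ℝ x (uvec θ) : ℝ) = x 0 * Real.cos θ + x 1 * Real.sin θ := by
  simp [PiLp.inner_apply, Fin.sum_univ_two, uvec, WithLp.equiv_symm_apply, PiLp.toLp_apply]
  ring


section basics
variable {M : Set E2} (hne : M.Nonempty) (hcpt : IsCompact M)

lemma continuous_innerUvec (θ : ℝ) : Continuous fun x : E2 => (inner ℝ x (uvec θ) : ℝ) :=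
  continuous_id.inner continuous_const

lemma supp_le (hcpt : IsCompact M) {x : E2} (hx : x ∈ M) (θ : ℝ) :
    (inner ℝ x (uvec θ) : ℝ) ≤ supp M θ :=
  le_csSup ((hcpt.image (continuous_innerUvec θ)).bddAbove) (Set.mem_image_of_mem _ hx)

lemma supp_attained (hne : M.Nonempty) (hcpt : IsCompact M) (θ : ℝ) :
    ∃ x ∈ M, (inner ℝ x (uvec θ) : ℝ) = supp M θ := by
  have h := (hcpt.image (continuous_innerUvec θ)).sSup_mem (hne.image _)
  obtain ⟨x, hx, hx'⟩ := h
  exact ⟨x, hx, hx'⟩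

lemma uvec_periodic : Function.Periodic uvec (2 * π) := by
  intro θ; unfold uvec; simp [Real.cos_add_two_pi, Real.sin_add_two_pi]

lemma supp_periodic (M : Set E2) : Function.Periodic (supp M) (2 * π) := by
  intro θ; unfold supp; rw [uvec_periodic θ]

end basics

section body
variable {K : Set E2}

/-- first coordinate of the boundary parametrization -/
def X1 (K : Set E2) (ω : ℝ) : ℝ := supp K ω * Real.cos ω - deriv (supp K) ω * Real.sin ω
/-- second coordinate of the boundary parametrization -/
def X2 (K : Set E2) (ω : ℝ) : ℝ := supp K ω * Real.sin ω + deriv (supp K) ω * Real.cos ω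

lemma maximizer_eq (hcpt : IsCompact K) (hd : DifferentiableAt ℝ (supp K) ω)
    {x : E2} (hx : x ∈ K) (hmax : (inner ℝ x (uvec ω) : ℝ) = supp K ω) :
    x 0 = X1 K ω ∧ x 1 = X2 K ω := by
  set h := supp K
  -- the function φ ↦ h φ - ⟨x, u_φ⟩ has a local min at ω
  have hg : ∀ φ, HasDerivAt (fun φ => (inner ℝ x (uvec φ) : ℝ))
      (-(x 0) * Real.sin φ + x 1 * Real.cos φ) φ := by
    intro φ
    have : (fun φ => (inner ℝ x (uvec φ) : ℝ)) = fun φ => x 0 * Real.cos φ + x 1 * Real.sin φ := by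
      funext φ; exact inner_uvec x φ
    rw [this]
    have := ((Real.hasDerivAt_cos φ).const_mul (x 0)).fun_add
      ((Real.hasDerivAt_sin φ).const_mul (x 1))
    exact this.congr_deriv (by ring)
  have hmin : IsLocalMin (fun φ => h φ - (inner ℝ x (uvec φ) : ℝ)) ω := by
    apply Filter.Eventually.of_forall
    intro φ
    have h1 : (inner ℝ x (uvec φ) : ℝ) ≤ h φ := supp_le hcpt hx φ
    simp only [hmax]
    linarith
  have hder : HasDerivAt (fun φ => h φ - (inner ℝ x (uvec φ) : ℝ))
      (deriv h ω - (-(x 0) * Real.sin ω + x 1 * Real.cos ω)) ω :=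
    hd.hasDerivAt.sub (hg ω)
  have h0 : deriv h ω - (-(x 0) * Real.sin ω + x 1 * Real.cos ω) = 0 := by
    have := hmin.deriv_eq_zero
    rwa [hder.deriv] at this
  have heq : x 0 * Real.cos ω + x 1 * Real.sin ω = h ω := by
    rw [← inner_uvec x ω]; exact hmax
  have hsc : Real.cos ω ^ 2 + Real.sin ω ^ 2 = 1 := by
    rw [add_comm]; exact Real.sin_sq_add_cos_sq ω
  constructor
  · show x 0 = h ω * Real.cos ω - deriv h ω * Real.sin ω
    linear_combination Real.cos ω * heq + Real.sin ω * h0 - x 0 * hsc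
  · show x 1 = h ω * Real.sin ω + deriv h ω * Real.cos ω
    linear_combination Real.sin ω * heq - Real.cos ω * h0 - x 1 * hsc

end body

section body2
variable {K : Set E2} {ω : ℝ}

def pt (K : Set E2) (ω : ℝ) : E2 := (WithLp.equiv 2 (Fin 2 → ℝ)).symm ![X1 K ω, X2 K ω]

lemma pt_apply0 : pt K ω 0 = X1 K ω := rfl
lemma pt_apply1 : pt K ω 1 = X2 K ω := rfl

lemma pt_mem (hne : K.Nonempty) (hcpt : IsCompact K) (hd : DifferentiableAt ℝ (supp K) ω) :
    pt K ω ∈ K := by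
  obtain ⟨x, hx, hmax⟩ := supp_attained hne hcpt ω
  obtain ⟨h0, h1⟩ := maximizer_eq hcpt hd hx hmax
  have : x = pt K ω := by
    refine PiLp.ext fun i => ?_
    fin_cases i
    · exact h0
    · exact h1
  rwa [← this]

lemma inner_pt_uvec : (inner ℝ (pt K ω) (uvec ω) : ℝ) = supp K ω := by
  rw [inner_uvec, pt_apply0, pt_apply1]
  unfold X1 X2
  have hsc : Real.sin ω ^ 2 + Real.cos ω ^ 2 = 1 := Real.sin_sq_add_cos_sq ω
  linear_combination supp K ω * hsc

lemma coord_bounds (hcpt : IsCompact K) {x : E2} (hx : x ∈ K) :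
    -(supp K π) ≤ x 0 ∧ x 0 ≤ supp K 0 := by
  have h1 := supp_le hcpt hx 0
  have h2 := supp_le hcpt hx π
  rw [inner_uvec] at h1 h2
  simp at h1 h2
  constructor <;> linarith

end body2

section slice
variable {K : Set E2} {x : ℝ}

def mk2 (x y : ℝ) : E2 := (WithLp.equiv 2 (Fin 2 → ℝ)).symm ![x, y]

lemma mk2_apply0 (x y : ℝ) : mk2 x y 0 = x := rfl
lemma mk2_apply1 (x y : ℝ) : mk2 x y 1 = y := rfl

lemma mk2_eta (z : E2) : mk2 (z 0) (z 1) = z := by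
  refine PiLp.ext fun i => ?_
  fin_cases i <;> rfl

def Slice (K : Set E2) (x : ℝ) : Set ℝ := {y | mk2 x y ∈ K}

lemma continuous_mk2 (x : ℝ) : Continuous fun y : ℝ => mk2 x y := by
  have heq : (fun y : ℝ => mk2 x y) = fun y : ℝ => x • uvec 0 + y • uvec (π / 2) := by
    funext y
    refine PiLp.ext fun i => ?_
    fin_cases i
    · show x = x * Real.cos 0 + y * Real.cos (π / 2)
      simp
    · show y = x * Real.sin 0 + y * Real.sin (π / 2)
      simp
  rw [heq]
  exact continuous_const.add (continuous_id.smul continuous_const)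

lemma slice_eq_image (K : Set E2) (x : ℝ) :
    Slice K x = (fun z : E2 => z 1) '' (K ∩ {z | z 0 = x}) := by
  ext y
  constructor
  · intro hy
    exact ⟨mk2 x y, ⟨hy, rfl⟩, rfl⟩
  · rintro ⟨z, ⟨hz, hz0⟩, rfl⟩
    have : mk2 x (z 1) = z := by rw [← hz0]; exact mk2_eta z
    simpa [Slice, this]

lemma slice_compact (hcpt : IsCompact K) (x : ℝ) : IsCompact (Slice K x) := by
  rw [slice_eq_image]
  apply IsCompact.image
  · exact hcpt.inter_right (isClosed_eq (by fun_prop) continuous_const)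
  · fun_prop

lemma slice_convex (hconv : Convex ℝ K) (x : ℝ) : Convex ℝ (Slice K x) := by
  intro y1 h1 y2 h2 a b ha hb hab
  have := hconv h1 h2 ha hb hab
  have heq : a • mk2 x y1 + b • mk2 x y2 = mk2 x (a * y1 + b * y2) := by
    refine PiLp.ext fun i => ?_
    fin_cases i
    · show a * x + b * x = x
      linear_combination x * hab
    · rfl
  simpa [Slice, ← heq] using this

end slice

lemma contDiff2_facts {f : ℝ → ℝ} (hf : ContDiff ℝ 2 f) :
    Differentiable ℝ f ∧ Differentiable ℝ (deriv f) ∧ Continuous (deriv (deriv f)) := by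
  have h1 : Differentiable ℝ f := hf.differentiable (by norm_num)
  have h2 : ContDiff ℝ 1 (deriv f) := by
    have h' := hf
    rw [show (2 : WithTop ℕ∞) = 1 + 1 from rfl, contDiff_succ_iff_deriv] at h'
    exact h'.2.2
  exact ⟨h1, h2.differentiable one_ne_zero, h2.continuous_deriv le_rfl⟩

section main
variable {K : Set E2} {ω x y : ℝ}

lemma slice_le (hcpt : IsCompact K) (hs : 0 < Real.sin ω)
    (hy : y ∈ Slice K (X1 K ω)) : y ≤ X2 K ω := by
  have hz : mk2 (X1 K ω) y ∈ K := hy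
  have hle := supp_le hcpt hz ω
  rw [inner_uvec, mk2_apply0, mk2_apply1] at hle
  have hval : supp K ω = X1 K ω * Real.cos ω + X2 K ω * Real.sin ω := by
    rw [← inner_pt_uvec (K := K) (ω := ω), inner_uvec, pt_apply0, pt_apply1]
  nlinarith

lemma slice_ge (hcpt : IsCompact K) (hs : Real.sin ω < 0)
    (hy : y ∈ Slice K (X1 K ω)) : X2 K ω ≤ y := by
  have hz : mk2 (X1 K ω) y ∈ K := hy
  have hle := supp_le hcpt hz ω
  rw [inner_uvec, mk2_apply0, mk2_apply1] at hle
  have hval : supp K ω = X1 K ω * Real.cos ω + X2 K ω * Real.sin ω := by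
    rw [← inner_pt_uvec (K := K) (ω := ω), inner_uvec, pt_apply0, pt_apply1]
  nlinarith

lemma slice_eq_of_sin_zero (hcpt : IsCompact K) (hd : DifferentiableAt ℝ (supp K) ω)
    (hs : Real.sin ω = 0) (hy : y ∈ Slice K (X1 K ω)) : y = X2 K ω := by
  have hz : mk2 (X1 K ω) y ∈ K := hy
  have hc2 : Real.cos ω ^ 2 = 1 := by
    have := Real.sin_sq_add_cos_sq ω
    rw [hs] at this; linarith [this]
  have hmax : (inner ℝ (mk2 (X1 K ω) y) (uvec ω) : ℝ) = supp K ω := by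
    rw [inner_uvec, mk2_apply0, mk2_apply1]
    unfold X1
    rw [hs]
    linear_combination supp K ω * hc2
  have := (maximizer_eq hcpt hd hz hmax).2
  rwa [mk2_apply1] at this

lemma mk2_X1_X2 (K : Set E2) (ω : ℝ) : mk2 (X1 K ω) (X2 K ω) = pt K ω := rfl

lemma X2_mem_slice (hne : K.Nonempty) (hcpt : IsCompact K)
    (hd : DifferentiableAt ℝ (supp K) ω) : X2 K ω ∈ Slice K (X1 K ω) := by
  show mk2 (X1 K ω) (X2 K ω) ∈ K
  rw [mk2_X1_X2]
  exact pt_mem hne hcpt hd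

lemma sin_zero_cases (h0 : 0 ≤ ω) (h1 : ω ≤ π) (hs : Real.sin ω = 0) : ω = 0 ∨ ω = π := by
  rcases eq_or_lt_of_le h1 with h | h
  · right; exact h
  · left
    rcases eq_or_lt_of_le h0 with h' | h'
    · exact h'.symm
    · exact absurd hs (ne_of_gt (Real.sin_pos_of_pos_of_lt_pi h' h))

lemma sSup_slice (hne : K.Nonempty) (hcpt : IsCompact K)
    (hd : Differentiable ℝ (supp K)) (hω : ω ∈ Set.Icc 0 π) :
    sSup (Slice K (X1 K ω)) = X2 K ω := by
  have hmem := X2_mem_slice hne hcpt (hd ω)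
  have hbdd := (slice_compact hcpt (X1 K ω)).bddAbove
  refine le_antisymm (csSup_le ⟨_, hmem⟩ fun y hy => ?_) (le_csSup hbdd hmem)
  have hsin : 0 ≤ Real.sin ω := Real.sin_nonneg_of_nonneg_of_le_pi hω.1 hω.2
  rcases eq_or_lt_of_le hsin with hs | hs
  · exact le_of_eq (slice_eq_of_sin_zero hcpt (hd ω) hs.symm hy)
  · exact slice_le hcpt hs hy

lemma sInf_slice (hne : K.Nonempty) (hcpt : IsCompact K)
    (hd : Differentiable ℝ (supp K)) (hω : ω ∈ Set.Icc π (2 * π)) :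
    sInf (Slice K (X1 K ω)) = X2 K ω := by
  have hmem := X2_mem_slice hne hcpt (hd ω)
  have hbdd := (slice_compact hcpt (X1 K ω)).bddBelow
  refine le_antisymm (csInf_le hbdd hmem) (le_csInf ⟨_, hmem⟩ fun y hy => ?_)
  have hsin : Real.sin ω ≤ 0 := by
    have h1 : 0 ≤ Real.sin (ω - π) :=
      Real.sin_nonneg_of_nonneg_of_le_pi (by linarith [hω.1]) (by linarith [hω.2])
    rw [Real.sin_sub_pi] at h1
    linarith
  rcases eq_or_lt_of_le hsin with hs | hs
  · exact ge_of_eq (slice_eq_of_sin_zero hcpt (hd ω) hs hy)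
  · exact slice_ge hcpt hs hy

end main

section main2
variable {K : Set E2} {x : ℝ}

def emap : E2 ≃ᵐ ℝ × ℝ :=
  (MeasurableEquiv.toLp 2 (Fin 2 → ℝ)).symm.trans (MeasurableEquiv.finTwoArrow)

lemma emap_apply (z : E2) : emap z = (z 0, z 1) := rfl

lemma emap_measurePreserving : MeasurePreserving (emap : E2 → ℝ × ℝ) := by
  have h1 := EuclideanSpace.volume_preserving_symm_measurableEquiv_toLp (Fin 2)
  have h2 := volume_preserving_finTwoArrow ℝ
  exact h2.comp h1

lemma emap_image_eq (K : Set E2) : (emap '' K) = (fun z : E2 => (z 0, z 1)) '' K := rfl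

lemma volume_eq_slices (hcpt : IsCompact K) :
    volume K = ∫⁻ x, volume (Slice K x) := by
  have hKm : MeasurableSet K := hcpt.isClosed.measurableSet
  have himcpt : IsCompact ((emap : E2 → ℝ × ℝ) '' K) := by
    rw [emap_image_eq]
    exact hcpt.image (by fun_prop)
  have himm : MeasurableSet ((emap : E2 → ℝ × ℝ) '' K) := himcpt.isClosed.measurableSet
  have h1 : volume ((emap : E2 → ℝ × ℝ) '' K) = volume K := by
    rw [show (emap : E2 → ℝ × ℝ) '' K = (emap.symm : ℝ × ℝ → E2) ⁻¹' K by
      exact Equiv.image_eq_preimage_symm _ _]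
    exact (MeasurePreserving.symm emap emap_measurePreserving).measure_preimage hKm.nullMeasurableSet
  rw [← h1, MeasureTheory.Measure.volume_eq_prod, Measure.prod_apply himm]
  congr 1
  funext x
  congr 1
  ext y
  simp only [Set.mem_preimage, Set.mem_image]
  constructor
  · rintro ⟨z, hz, hzeq⟩
    have h0 : z 0 = x := congrArg Prod.fst hzeq
    have h1 : z 1 = y := congrArg Prod.snd hzeq
    show mk2 x y ∈ K
    rw [← h0, ← h1, mk2_eta]
    exact hz
  · intro hy
    exact ⟨mk2 x y, hy, rfl⟩

end main2

lemma periodic_deriv {f : ℝ → ℝ} {c : ℝ} (hf : Function.Periodic f c) :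
    Function.Periodic (deriv f) c := by
  intro x
  rw [← deriv_comp_add_const]
  congr 1
  funext y
  exact hf y

section main3
variable {K : Set E2} {x : ℝ}

lemma X1_cont (hsm : ContDiff ℝ 2 (supp K)) : Continuous (X1 K) := by
  obtain ⟨hd1, hd2, hc2⟩ := contDiff2_facts hsm
  exact (hd1.continuous.mul Real.continuous_cos).sub
    (hd2.continuous.mul Real.continuous_sin)

lemma X2_cont (hsm : ContDiff ℝ 2 (supp K)) : Continuous (X2 K) := by
  obtain ⟨hd1, hd2, hc2⟩ := contDiff2_facts hsm
  exact (hd1.continuous.mul Real.continuous_sin).add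
    (hd2.continuous.mul Real.continuous_cos)

lemma X1_hasDerivAt (hsm : ContDiff ℝ 2 (supp K)) (ω : ℝ) :
    HasDerivAt (X1 K) (-(supp K ω + deriv (deriv (supp K)) ω) * Real.sin ω) ω := by
  obtain ⟨hd1, hd2, hc2⟩ := contDiff2_facts hsm
  have h1 := (((hd1 ω).hasDerivAt).fun_mul (Real.hasDerivAt_cos ω)).fun_sub
    (((hd2 ω).hasDerivAt).fun_mul (Real.hasDerivAt_sin ω))
  have : HasDerivAt (fun ω => supp K ω * Real.cos ω - deriv (supp K) ω * Real.sin ω)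
      (-(supp K ω + deriv (deriv (supp K)) ω) * Real.sin ω) ω := by
    exact h1.congr_deriv (by ring)
  exact this

lemma X1_zero : X1 K 0 = supp K 0 := by simp [X1]
lemma X1_pi : X1 K π = -(supp K π) := by simp [X1]
lemma X1_two_pi : X1 K (2 * π) = supp K 0 := by
  have := supp_periodic K 0
  simp only [zero_add] at this
  simp [X1, this]

lemma X1_mem_I (hne : K.Nonempty) (hcpt : IsCompact K) (hsm : ContDiff ℝ 2 (supp K)) (ω : ℝ) :
    X1 K ω ∈ Set.Icc (-(supp K π)) (supp K 0) := by
  obtain ⟨hd1, _, _⟩ := contDiff2_facts hsm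
  have hm := pt_mem hne hcpt (hd1 ω)
  have := coord_bounds hcpt hm
  rw [pt_apply0] at this
  exact ⟨this.1, this.2⟩

lemma exists_X1_eq_upper (hsm : ContDiff ℝ 2 (supp K))
    (hx : x ∈ Set.Icc (-(supp K π)) (supp K 0)) : ∃ ω ∈ Set.Icc (0:ℝ) π, X1 K ω = x := by
  have hsub := intermediate_value_Icc' (le_of_lt Real.pi_pos) (X1_cont hsm).continuousOn
  rw [X1_zero, X1_pi] at hsub
  obtain ⟨ω, hω, hX⟩ := hsub hx
  exact ⟨ω, hω, hX⟩

lemma exists_X1_eq_lower (hsm : ContDiff ℝ 2 (supp K))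
    (hx : x ∈ Set.Icc (-(supp K π)) (supp K 0)) : ∃ ω ∈ Set.Icc π (2*π), X1 K ω = x := by
  have hsub := intermediate_value_Icc (by linarith [Real.pi_pos] : π ≤ 2*π)
    (X1_cont hsm).continuousOn
  rw [X1_two_pi, X1_pi] at hsub
  obtain ⟨ω, hω, hX⟩ := hsub hx
  exact ⟨ω, hω, hX⟩

lemma slice_nonempty (hne : K.Nonempty) (hcpt : IsCompact K) (hsm : ContDiff ℝ 2 (supp K))
    (hx : x ∈ Set.Icc (-(supp K π)) (supp K 0)) : (Slice K x).Nonempty := by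
  obtain ⟨hd1, _, _⟩ := contDiff2_facts hsm
  obtain ⟨ω, _, hX⟩ := exists_X1_eq_upper hsm hx
  exact ⟨X2 K ω, by rw [← hX]; exact X2_mem_slice hne hcpt (hd1 ω)⟩

lemma slice_empty (hcpt : IsCompact K)
    (hx : x ∉ Set.Icc (-(supp K π)) (supp K 0)) : Slice K x = ∅ := by
  rw [Set.eq_empty_iff_forall_notMem]
  intro y hy
  have hz : mk2 x y ∈ K := hy
  have := coord_bounds hcpt hz
  rw [mk2_apply0] at this
  exact hx ⟨this.1, this.2⟩

lemma slice_eq_Icc (hcpt : IsCompact K) (hconv : Convex ℝ K)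
    (hx : (Slice K x).Nonempty) :
    Slice K x = Set.Icc (sInf (Slice K x)) (sSup (Slice K x)) := by
  have hc := slice_compact hcpt x
  apply Set.Subset.antisymm
  · intro y hy
    exact ⟨csInf_le hc.bddBelow hy, le_csSup hc.bddAbove hy⟩
  · exact ((slice_convex hconv x).ordConnected).out (hc.sInf_mem hx) (hc.sSup_mem hx)

lemma t_contOn (hne : K.Nonempty) (hcpt : IsCompact K) (hsm : ContDiff ℝ 2 (supp K)) :
    ContinuousOn (fun x => sSup (Slice K x)) (Set.Icc (-(supp K π)) (supp K 0)) := by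
  obtain ⟨hd1, _, _⟩ := contDiff2_facts hsm
  rw [continuousOn_iff_continuous_restrict]
  set I := Set.Icc (-(supp K π)) (supp K 0) with hI
  set q : Set.Icc (0:ℝ) π → I := fun ω => ⟨X1 K ω, X1_mem_I hne hcpt hsm ω⟩ with hq
  have hqc : Continuous q :=
    Continuous.subtype_mk ((X1_cont hsm).comp continuous_subtype_val) _
  have hqs : Function.Surjective q := by
    rintro ⟨x, hx⟩
    obtain ⟨ω, hω, hX⟩ := exists_X1_eq_upper hsm hx
    exact ⟨⟨ω, hω⟩, Subtype.ext hX⟩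
  have hquot : Topology.IsQuotientMap q := (hqc.isClosedMap).isQuotientMap hqc hqs
  rw [hquot.continuous_iff]
  have heq : (I.domRestrict (fun x => sSup (Slice K x))) ∘ q
      = fun ω : Set.Icc (0:ℝ) π => X2 K (ω : ℝ) := by
    funext ω
    exact sSup_slice hne hcpt hd1 ω.2
  rw [heq]
  exact (X2_cont hsm).comp continuous_subtype_val

lemma b_contOn (hne : K.Nonempty) (hcpt : IsCompact K) (hsm : ContDiff ℝ 2 (supp K)) :
    ContinuousOn (fun x => sInf (Slice K x)) (Set.Icc (-(supp K π)) (supp K 0)) := by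
  obtain ⟨hd1, _, _⟩ := contDiff2_facts hsm
  rw [continuousOn_iff_continuous_restrict]
  set I := Set.Icc (-(supp K π)) (supp K 0) with hI
  set q : Set.Icc π (2*π) → I := fun ω => ⟨X1 K ω, X1_mem_I hne hcpt hsm ω⟩ with hq
  have hqc : Continuous q :=
    Continuous.subtype_mk ((X1_cont hsm).comp continuous_subtype_val) _
  have hqs : Function.Surjective q := by
    rintro ⟨x, hx⟩
    obtain ⟨ω, hω, hX⟩ := exists_X1_eq_lower hsm hx
    exact ⟨⟨ω, hω⟩, Subtype.ext hX⟩
  have hquot : Topology.IsQuotientMap q := (hqc.isClosedMap).isQuotientMap hqc hqs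
  rw [hquot.continuous_iff]
  have heq : (I.domRestrict (fun x => sInf (Slice K x))) ∘ q
      = fun ω : Set.Icc π (2*π) => X2 K (ω : ℝ) := by
    funext ω
    exact sInf_slice hne hcpt hd1 ω.2
  rw [heq]
  exact (X2_cont hsm).comp continuous_subtype_val

end main3

section area
variable {K : Set E2}

theorem area_formula (hne : K.Nonempty) (hcpt : IsCompact K) (hconv : Convex ℝ K)
    (hsm : ContDiff ℝ 2 (supp K)) :
    (volume K).toReal =
      2⁻¹ * ∫ ω in (0:ℝ)..(2 * π), supp K ω * (supp K ω + deriv (deriv (supp K)) ω) := by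
  obtain ⟨hd1, hd2, hc2⟩ := contDiff2_facts hsm
  set h := supp K with hh
  set t : ℝ → ℝ := fun x => sSup (Slice K x) with ht
  set b : ℝ → ℝ := fun x => sInf (Slice K x) with hb
  set I : Set ℝ := Set.Icc (-(h π)) (h 0) with hIdef
  have hIne : -(h π) ≤ h 0 := by
    obtain ⟨z, hz⟩ := hne
    have := coord_bounds hcpt hz
    linarith [this.1, this.2]
  -- continuity facts
  have htc : ContinuousOn t I := t_contOn hne hcpt hsm
  have hbc : ContinuousOn b I := b_contOn hne hcpt hsm
  have hFcont : Continuous (fun ω => (h ω + deriv (deriv h) ω) * Real.sin ω * X2 K ω) :=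
    ((hd1.continuous.add hc2).mul Real.continuous_sin).mul (X2_cont hsm)
  -- Step: volume K as an integral over slices
  have S2 : volume K = ∫⁻ x, volume (Slice K x) := volume_eq_slices hcpt
  have S3 : ∀ x, volume (Slice K x)
      = Set.indicator I (fun x => ENNReal.ofReal (t x - b x)) x := by
    intro x
    by_cases hx : x ∈ I
    · have hnem : (Slice K x).Nonempty := slice_nonempty hne hcpt hsm hx
      rw [Set.indicator_of_mem hx, slice_eq_Icc hcpt hconv hnem, Real.volume_Icc]
    · rw [Set.indicator_of_notMem hx, slice_empty hcpt hx, measure_empty]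
  have hsubc : ContinuousOn (fun x => t x - b x) I := htc.sub hbc
  have hint : IntegrableOn (fun x => t x - b x) I := hsubc.integrableOn_Icc
  have hpos : 0 ≤ᵐ[volume.restrict I] fun x => t x - b x := by
    apply ae_restrict_of_forall_mem measurableSet_Icc
    intro x hx
    have hnem : (Slice K x).Nonempty := slice_nonempty hne hcpt hsm hx
    have hc := slice_compact hcpt x
    have := csInf_le_csSup hnem hc.bddBelow hc.bddAbove
    simp only [Pi.zero_apply]
    linarith [this]
  have S4 : (volume K).toReal = ∫ x in I, (t x - b x) := by
    rw [S2]
    have : (∫⁻ x, volume (Slice K x))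
        = ∫⁻ x in I, ENNReal.ofReal (t x - b x) := by
      rw [show (fun x => volume (Slice K x))
          = Set.indicator I (fun x => ENNReal.ofReal (t x - b x)) from funext S3]
      exact lintegral_indicator measurableSet_Icc _
    rw [this, ← ofReal_integral_eq_lintegral_ofReal hint hpos,
      ENNReal.toReal_ofReal (integral_nonneg_of_ae hpos)]
  set F : ℝ → ℝ := fun ω => (h ω + deriv (deriv h) ω) * Real.sin ω * X2 K ω with hF
  have hti : IntegrableOn t I := htc.integrableOn_Icc
  have hbi : IntegrableOn b I := hbc.integrableOn_Icc
  have S5 : ∫ x in I, (t x - b x) = (∫ x in I, t x) - ∫ x in I, b x :=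
    integral_sub hti hbi
  -- change of variables for the upper boundary
  have hcont' : ContinuousOn (fun ω => -(h ω + deriv (deriv h) ω) * Real.sin ω)
      (Set.uIcc (0:ℝ) π) :=
    (((hd1.continuous.add hc2).neg).mul Real.continuous_sin).continuousOn
  have hcont'' : ContinuousOn (fun ω => -(h ω + deriv (deriv h) ω) * Real.sin ω)
      (Set.uIcc π (2*π)) :=
    (((hd1.continuous.add hc2).neg).mul Real.continuous_sin).continuousOn
  have himg1 : X1 K '' Set.uIcc (0:ℝ) π ⊆ I := by
    rintro _ ⟨ω, _, rfl⟩
    exact X1_mem_I hne hcpt hsm ω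
  have himg2 : X1 K '' Set.uIcc π (2*π) ⊆ I := by
    rintro _ ⟨ω, _, rfl⟩
    exact X1_mem_I hne hcpt hsm ω
  have key1 := intervalIntegral.integral_comp_smul_deriv'
    (fun ω _ => X1_hasDerivAt hsm ω) hcont' (htc.mono himg1)
  have key2 := intervalIntegral.integral_comp_smul_deriv'
    (fun ω _ => X1_hasDerivAt hsm ω) hcont'' (hbc.mono himg2)
  have hLHS1 : (∫ ω in (0:ℝ)..π, (-(h ω + deriv (deriv h) ω) * Real.sin ω) • ((t ∘ X1 K) ω))
      = ∫ ω in (0:ℝ)..π, -(F ω) := by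
    apply intervalIntegral.integral_congr
    intro ω hω
    rw [Set.uIcc_of_le Real.pi_pos.le] at hω
    have hts : t (X1 K ω) = X2 K ω := sSup_slice hne hcpt hd1 hω
    simp only [Function.comp_apply, smul_eq_mul, hts, hF]
    ring
  have hLHS2 : (∫ ω in π..(2*π), (-(h ω + deriv (deriv h) ω) * Real.sin ω) • ((b ∘ X1 K) ω))
      = ∫ ω in π..(2*π), -(F ω) := by
    apply intervalIntegral.integral_congr
    intro ω hω
    rw [Set.uIcc_of_le (by linarith [Real.pi_pos] : π ≤ 2*π)] at hω
    have hts : b (X1 K ω) = X2 K ω := sInf_slice hne hcpt hd1 hω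
    simp only [Function.comp_apply, smul_eq_mul, hts, hF]
    ring
  rw [hLHS1, X1_zero, X1_pi] at key1
  rw [hLHS2, X1_pi, X1_two_pi] at key2
  -- key1 : ∫ 0..π, -(F ω) = ∫ x in (h 0)..(-(h π)), t x
  -- key2 : ∫ π..2π, -(F ω) = ∫ x in (-(h π))..(h 0), b x
  have hIt : ∫ x in I, t x = ∫ ω in (0:ℝ)..π, F ω := by
    have e1 : (∫ x in (h 0)..(-(h π)), t x) = -∫ x in (-(h π))..(h 0), t x :=
      intervalIntegral.integral_symm _ _
    have e2 : (∫ x in (-(h π))..(h 0), t x) = ∫ x in I, t x := by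
      rw [intervalIntegral.integral_of_le hIne, hIdef, MeasureTheory.integral_Icc_eq_integral_Ioc]
    have e3 : (∫ ω in (0:ℝ)..π, -(F ω)) = -∫ ω in (0:ℝ)..π, F ω :=
      intervalIntegral.integral_neg
    rw [e1, e2, e3] at key1
    linarith
  have hIb : ∫ x in I, b x = -∫ ω in π..(2*π), F ω := by
    have e2 : (∫ x in (-(h π))..(h 0), b x) = ∫ x in I, b x := by
      rw [intervalIntegral.integral_of_le hIne, hIdef, MeasureTheory.integral_Icc_eq_integral_Ioc]
    have e3 : (∫ ω in π..(2*π), -(F ω)) = -∫ ω in π..(2*π), F ω :=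
      intervalIntegral.integral_neg
    rw [e2, e3] at key2
    linarith
  have S7 : (volume K).toReal = ∫ ω in (0:ℝ)..(2*π), F ω := by
    rw [S4, S5, hIt, hIb]
    have := intervalIntegral.integral_add_adjacent_intervals
      (a := (0:ℝ)) (b := π) (c := 2*π) (f := F) (μ := volume)
      ((hFcont).intervalIntegrable _ _) ((hFcont).intervalIntegrable _ _)
    linarith
  -- the antiderivative trick
  set G : ℝ → ℝ := fun ω => 2⁻¹ * Real.sin ω * Real.cos ω * ((deriv h ω)^2 - (h ω)^2)
      - 2⁻¹ * ((Real.cos ω)^2 - (Real.sin ω)^2) * (h ω * deriv h ω) with hGdef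
  have hG : ∀ ω, HasDerivAt G
      (F ω - 2⁻¹ * (h ω * (h ω + deriv (deriv h) ω))) ω := by
    intro ω
    have hsc : Real.sin ω ^ 2 + Real.cos ω ^ 2 = 1 := Real.sin_sq_add_cos_sq ω
    have Hh : HasDerivAt h (deriv h ω) ω := (hd1 ω).hasDerivAt
    have Hh' : HasDerivAt (deriv h) (deriv (deriv h) ω) ω := (hd2 ω).hasDerivAt
    have Hs := Real.hasDerivAt_sin ω
    have Hc := Real.hasDerivAt_cos ω
    have HG := (((Hs.const_mul (2⁻¹:ℝ)).fun_mul Hc).fun_mul ((Hh'.fun_pow 2).fun_sub (Hh.fun_pow 2))).fun_sub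
      ((((Hc.fun_pow 2).fun_sub (Hs.fun_pow 2)).const_mul (2⁻¹:ℝ)).fun_mul (Hh.fun_mul Hh'))
    refine HG.congr_deriv ?_
    have hX2 : X2 K ω = h ω * Real.sin ω + deriv h ω * Real.cos ω := rfl
    simp only [hF, hX2]
    push_cast
    linear_combination (-(2⁻¹:ℝ) * ((h ω)^2 + h ω * deriv (deriv h) ω)) * hsc
  have hgc : Continuous (fun ω => 2⁻¹ * (h ω * (h ω + deriv (deriv h) ω))) :=
    continuous_const.mul (hd1.continuous.mul (hd1.continuous.add hc2))
  have hzero : (∫ ω in (0:ℝ)..(2*π),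
      (F ω - 2⁻¹ * (h ω * (h ω + deriv (deriv h) ω)))) = G (2*π) - G 0 :=
    intervalIntegral.integral_eq_sub_of_hasDerivAt (fun ω _ => hG ω)
      ((hFcont.sub hgc).intervalIntegrable _ _)
  have h2pi : h (2*π) = h 0 := by
    have := supp_periodic K 0
    simpa using this
  have h2pi' : deriv h (2*π) = deriv h 0 := by
    have := periodic_deriv (supp_periodic K) 0
    simpa using this
  have hGval : G (2*π) = G 0 := by
    simp [hGdef, h2pi, h2pi', Real.sin_two_pi, Real.cos_two_pi]
  have hsplit : (∫ ω in (0:ℝ)..(2*π),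
      (F ω - 2⁻¹ * (h ω * (h ω + deriv (deriv h) ω))))
      = (∫ ω in (0:ℝ)..(2*π), F ω)
        - ∫ ω in (0:ℝ)..(2*π), 2⁻¹ * (h ω * (h ω + deriv (deriv h) ω)) :=
    intervalIntegral.integral_sub (hFcont.intervalIntegrable _ _)
      (hgc.intervalIntegrable _ _)
  have hconst : (∫ ω in (0:ℝ)..(2*π), 2⁻¹ * (h ω * (h ω + deriv (deriv h) ω)))
      = 2⁻¹ * ∫ ω in (0:ℝ)..(2*π), h ω * (h ω + deriv (deriv h) ω) :=
    intervalIntegral.integral_const_mul _ _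
  rw [S7]
  rw [hGval, sub_self] at hzero
  rw [hsplit, hconst] at hzero
  linarith


end area

section final

lemma rot_apply0 (θ : ℝ) (x : E2) : rot θ x 0 = Real.cos θ * x 0 - Real.sin θ * x 1 := rfl
lemma rot_apply1 (θ : ℝ) (x : E2) : rot θ x 1 = Real.sin θ * x 0 + Real.cos θ * x 1 := rfl

lemma rot_eq_lin (θ : ℝ) (x : E2) : rot θ x = x 0 • uvec θ + x 1 • uvec (θ + π/2) := by
  refine PiLp.ext fun i => ?_
  fin_cases i
  · show Real.cos θ * x 0 - Real.sin θ * x 1 = x 0 * Real.cos θ + x 1 * Real.cos (θ + π/2)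
    rw [Real.cos_add_pi_div_two]
    ring
  · show Real.sin θ * x 0 + Real.cos θ * x 1 = x 0 * Real.sin θ + x 1 * Real.sin (θ + π/2)
    rw [Real.sin_add_pi_div_two]
    ring

lemma rot_continuous (θ : ℝ) : Continuous (rot θ) := by
  have : (rot θ) = fun x : E2 => x 0 • uvec θ + x 1 • uvec (θ + π/2) := funext (rot_eq_lin θ)
  rw [this]
  have h0 : Continuous fun x : E2 => x 0 := by fun_prop
  have h1 : Continuous fun x : E2 => x 1 := by fun_prop
  exact (h0.smul continuous_const).add (h1.smul continuous_const)

lemma rot_smul_add (θ a b : ℝ) (x y : E2) :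
    a • rot θ x + b • rot θ y = rot θ (a • x + b • y) := by
  refine PiLp.ext fun i => ?_
  fin_cases i
  · show a * (Real.cos θ * x 0 - Real.sin θ * x 1) + b * (Real.cos θ * y 0 - Real.sin θ * y 1)
      = Real.cos θ * (a * x 0 + b * y 0) - Real.sin θ * (a * x 1 + b * y 1)
    ring
  · show a * (Real.sin θ * x 0 + Real.cos θ * x 1) + b * (Real.sin θ * y 0 + Real.cos θ * y 1)
      = Real.sin θ * (a * x 0 + b * y 0) + Real.cos θ * (a * x 1 + b * y 1)
    ring

lemma inner_sub_rot (θ ω : ℝ) (x y : E2) :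
    (inner ℝ (x - rot θ y) (uvec ω) : ℝ)
      = (inner ℝ x (uvec ω) : ℝ) + (inner ℝ y (uvec (ω - θ + π)) : ℝ) := by
  have hx : (x - rot θ y) 0 = x 0 - (Real.cos θ * y 0 - Real.sin θ * y 1) := rfl
  have hy : (x - rot θ y) 1 = x 1 - (Real.sin θ * y 0 + Real.cos θ * y 1) := rfl
  rw [inner_uvec, inner_uvec, inner_uvec, hx, hy]
  simp [Real.cos_add, Real.sin_add, Real.cos_sub, Real.sin_sub]
  ring

variable {M : Set E2} {θ : ℝ}

lemma diffBody_eq (M : Set E2) (θ : ℝ) :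
    {p : E2 | ∃ x ∈ M, ∃ y ∈ M, p = x - rot θ y}
      = (fun q : E2 × E2 => q.1 - rot θ q.2) '' (M ×ˢ M) := by
  ext p
  constructor
  · rintro ⟨x, hx, y, hy, rfl⟩
    exact ⟨(x, y), ⟨hx, hy⟩, rfl⟩
  · rintro ⟨⟨x, y⟩, ⟨hx, hy⟩, rfl⟩
    exact ⟨x, hx, y, hy, rfl⟩

lemma diffBody_compact (hcpt : IsCompact M) :
    IsCompact {p : E2 | ∃ x ∈ M, ∃ y ∈ M, p = x - rot θ y} := by
  rw [diffBody_eq]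
  exact (hcpt.prod hcpt).image (continuous_fst.sub ((rot_continuous θ).comp continuous_snd))

lemma diffBody_convex (hconv : Convex ℝ M) :
    Convex ℝ {p : E2 | ∃ x ∈ M, ∃ y ∈ M, p = x - rot θ y} := by
  rintro p ⟨x1, hx1, y1, hy1, rfl⟩ q ⟨x2, hx2, y2, hy2, rfl⟩ a b ha hb hab
  refine ⟨a • x1 + b • x2, hconv hx1 hx2 ha hb hab,
    a • y1 + b • y2, hconv hy1 hy2 ha hb hab, ?_⟩
  rw [← rot_smul_add]
  module

lemma diffBody_nonempty (hne : M.Nonempty) :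
    {p : E2 | ∃ x ∈ M, ∃ y ∈ M, p = x - rot θ y}.Nonempty := by
  obtain ⟨x, hx⟩ := hne
  exact ⟨x - rot θ x, x, hx, x, hx, rfl⟩

lemma supp_diffBody (hne : M.Nonempty) (hcpt : IsCompact M) (ω : ℝ) :
    supp {p : E2 | ∃ x ∈ M, ∃ y ∈ M, p = x - rot θ y} ω
      = supp M ω + supp M (ω - θ + π) := by
  set S := {p : E2 | ∃ x ∈ M, ∃ y ∈ M, p = x - rot θ y} with hS
  have hScpt : IsCompact S := diffBody_compact hcpt
  have hSne : S.Nonempty := diffBody_nonempty hne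
  apply le_antisymm
  · apply csSup_le ((hSne).image _)
    rintro v ⟨p, ⟨x, hx, y, hy, rfl⟩, rfl⟩
    show (inner ℝ (x - rot θ y) (uvec ω) : ℝ) ≤ _
    rw [inner_sub_rot]
    exact add_le_add (supp_le hcpt hx ω) (supp_le hcpt hy (ω - θ + π))
  · obtain ⟨x, hx, hxv⟩ := supp_attained hne hcpt ω
    obtain ⟨y, hy, hyv⟩ := supp_attained hne hcpt (ω - θ + π)
    have hmem : x - rot θ y ∈ S := ⟨x, hx, y, hy, rfl⟩
    have := supp_le hScpt hmem ω
    rw [inner_sub_rot, hxv, hyv] at this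
    exact this

end final

lemma periodic_shift_integral {f : ℝ → ℝ} (hf : Function.Periodic f (2*π)) (c : ℝ) :
    ∫ x in (0:ℝ)..(2*π), f (x + c) = ∫ x in (0:ℝ)..(2*π), f x := by
  rw [intervalIntegral.integral_comp_add_right]
  have h2 := hf.intervalIntegral_add_eq c 0
  simpa [zero_add, add_comm] using h2

theorem stmt2 (M : Set E2) (hne : M.Nonempty) (hcpt : IsCompact M) (hconv : Convex ℝ M)
    (hsm : ContDiff ℝ 2 (supp M)) (θ : ℝ) :
    Ex θ M = 2 * (volume M).toReal +
      (1 / 2) * ∫ ω in (0:ℝ)..(2 * π),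
        (supp M (ω + θ + π) + supp M (ω - θ + π)) *
          (supp M ω + deriv (deriv (supp M)) ω) := by
  obtain ⟨hd1, hd2, hc2⟩ := contDiff2_facts hsm
  set S := {p : E2 | ∃ x ∈ M, ∃ y ∈ M, p = x - rot θ y} with hSdef
  have hScpt : IsCompact S := diffBody_compact hcpt
  have hSconv : Convex ℝ S := diffBody_convex hconv
  have hSne : S.Nonempty := diffBody_nonempty hne
  set c : ℝ := π - θ with hc
  set h : ℝ → ℝ := supp M with hh
  have hsuppS : supp S = fun ω => h ω + h (ω + c) := by
    funext ω
    rw [supp_diffBody hne hcpt ω]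
    congr 1
    · congr 1
      ring
  have hcdiff : Differentiable ℝ (fun ω : ℝ => h (ω + c)) :=
    hd1.comp (differentiable_id.add_const c)
  have hgder : deriv (fun ω => h ω + h (ω + c)) = fun ω => deriv h ω + deriv h (ω + c) := by
    funext ω
    rw [deriv_fun_add (hd1 ω) (hcdiff ω), deriv_comp_add_const]
  have hcdiff' : Differentiable ℝ (fun ω : ℝ => deriv h (ω + c)) :=
    hd2.comp (differentiable_id.add_const c)
  have hgder2 : deriv (deriv (fun ω => h ω + h (ω + c)))
      = fun ω => deriv (deriv h) ω + deriv (deriv h) (ω + c) := by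
    rw [hgder]
    funext ω
    rw [deriv_fun_add (hd2 ω) (hcdiff' ω), deriv_comp_add_const]
  have hsmS : ContDiff ℝ 2 (supp S) := by
    rw [hsuppS]
    exact hsm.add (hsm.comp (contDiff_id.add contDiff_const))
  have hEx : Ex θ M = (volume S).toReal := rfl
  rw [hEx, area_formula hSne hScpt hSconv hsmS, hsuppS, hgder2]
  -- continuity of the pieces
  have hch : Continuous h := hd1.continuous
  have hch2 : Continuous (deriv (deriv h)) := hc2
  have hP : Continuous (fun ω => h ω * (h ω + deriv (deriv h) ω)) :=
    hch.mul (hch.add hch2)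
  have haddc : Continuous (fun ω : ℝ => ω + c) := continuous_id.add continuous_const
  have hPc : Continuous (fun ω => h (ω + c) * (h (ω + c) + deriv (deriv h) (ω + c))) :=
    hP.comp haddc
  have hQ1 : Continuous (fun ω => h (ω + θ + π) * (h ω + deriv (deriv h) ω)) :=
    (hch.comp (by continuity)).mul (hch.add hch2)
  have hQ1c : Continuous (fun ω => h ω * (h (ω + c) + deriv (deriv h) (ω + c))) :=
    hch.mul ((hch.comp haddc).add (hch2.comp haddc))
  have hQ2 : Continuous (fun ω => h (ω + c) * (h ω + deriv (deriv h) ω)) :=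
    (hch.comp haddc).mul (hch.add hch2)
  -- periodicity
  have hper : Function.Periodic h (2*π) := supp_periodic M
  have hper2 : Function.Periodic (deriv (deriv h)) (2*π) :=
    periodic_deriv (periodic_deriv hper)
  have hPper : Function.Periodic (fun ω => h ω * (h ω + deriv (deriv h) ω)) (2*π) := by
    intro x
    simp only [hper x, hper2 x]
  have hQ1per : Function.Periodic (fun ω => h (ω + θ + π) * (h ω + deriv (deriv h) ω)) (2*π) := by
    intro x
    have harg : x + 2*π + θ + π = (x + θ + π) + 2*π := by ring
    simp only [harg, hper (x + θ + π), hper x, hper2 x]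
  -- split the integral into four pieces
  have hsplit : (∫ ω in (0:ℝ)..(2*π),
        (h ω + h (ω + c)) * ((h ω + h (ω + c)) + (deriv (deriv h) ω + deriv (deriv h) (ω + c))))
      = (∫ ω in (0:ℝ)..(2*π), h ω * (h ω + deriv (deriv h) ω))
        + (∫ ω in (0:ℝ)..(2*π), h (ω + c) * (h (ω + c) + deriv (deriv h) (ω + c)))
        + (∫ ω in (0:ℝ)..(2*π), h ω * (h (ω + c) + deriv (deriv h) (ω + c)))
        + (∫ ω in (0:ℝ)..(2*π), h (ω + c) * (h ω + deriv (deriv h) ω)) := by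
    rw [← intervalIntegral.integral_add (hP.intervalIntegrable _ _) (hPc.intervalIntegrable _ _),
      ← intervalIntegral.integral_add
        ((hP.fun_add hPc).intervalIntegrable _ _) (hQ1c.intervalIntegrable _ _),
      ← intervalIntegral.integral_add
        (((hP.fun_add hPc).fun_add hQ1c).intervalIntegrable _ _) (hQ2.intervalIntegrable _ _)]
    apply intervalIntegral.integral_congr
    intro ω _
    ring
  -- evaluate the pieces
  have hPceq : (∫ ω in (0:ℝ)..(2*π), h (ω + c) * (h (ω + c) + deriv (deriv h) (ω + c)))
      = ∫ ω in (0:ℝ)..(2*π), h ω * (h ω + deriv (deriv h) ω) :=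
    periodic_shift_integral hPper c
  have hQ1eq : (∫ ω in (0:ℝ)..(2*π), h ω * (h (ω + c) + deriv (deriv h) (ω + c)))
      = ∫ ω in (0:ℝ)..(2*π), h (ω + θ + π) * (h ω + deriv (deriv h) ω) := by
    have hpt : ∀ ω, h ω * (h (ω + c) + deriv (deriv h) (ω + c))
        = (fun ω => h (ω + θ + π) * (h ω + deriv (deriv h) ω)) (ω + c) := by
      intro ω
      show h ω * (h (ω + c) + deriv (deriv h) (ω + c))
          = h (ω + c + θ + π) * (h (ω + c) + deriv (deriv h) (ω + c))
      have harg : ω + c + θ + π = ω + 2*π := by rw [hc]; ring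
      rw [harg, hper ω]
    rw [show (fun ω => h ω * (h (ω + c) + deriv (deriv h) (ω + c)))
        = (fun ω => (fun ω' => h (ω' + θ + π) * (h ω' + deriv (deriv h) ω')) (ω + c))
        from funext hpt]
    exact periodic_shift_integral hQ1per c
  have hQ12 : (∫ ω in (0:ℝ)..(2*π), h (ω + θ + π) * (h ω + deriv (deriv h) ω))
      + (∫ ω in (0:ℝ)..(2*π), h (ω + c) * (h ω + deriv (deriv h) ω))
      = ∫ ω in (0:ℝ)..(2 * π),
        (h (ω + θ + π) + h (ω - θ + π)) * (h ω + deriv (deriv h) ω) := by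
    rw [← intervalIntegral.integral_add (hQ1.intervalIntegrable _ _)
      (hQ2.intervalIntegrable _ _)]
    apply intervalIntegral.integral_congr
    intro ω _
    show h (ω + θ + π) * (h ω + deriv (deriv h) ω) + h (ω + c) * (h ω + deriv (deriv h) ω)
        = (h (ω + θ + π) + h (ω - θ + π)) * (h ω + deriv (deriv h) ω)
    have harg : ω + c = ω - θ + π := by rw [hc]; ring
    rw [harg]
    ring
  have hA := area_formula hne hcpt hconv hsm
  rw [hsplit, hPceq, hQ1eq]
  rw [← hh] at hA
  linarith [hQ12, hA]
end
end

section
/- For every convex body M in ℝ² and every θ ∈ ℝ, Ex(π,M) ≤ Ex(θ,M); that is, the excluded area function is minimised at the anti-parallel configuration θ = π. -/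
open MeasureTheory Real

noncomputable section

open Set Pointwise
open scoped ENNReal

-- volume of a convex bounded nonempty subset of ℝ
lemma conv_vol {S : Set ℝ} (hS : Convex ℝ S) (hb : Bornology.IsBounded S) (hne : S.Nonempty) :
    volume S = ENNReal.ofReal (sSup S - sInf S) := by
  have hba : BddAbove S := hb.bddAbove
  have hbb : BddBelow S := hb.bddBelow
  have h1 : S ⊆ Icc (sInf S) (sSup S) := subset_Icc_csInf_csSup hbb hba
  have h2 : Ioo (sInf S) (sSup S) ⊆ S :=
    IsConnected.Ioo_csInf_csSup_subset ⟨hne, hS.isPreconnected⟩ hbb hba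
  refine le_antisymm ?_ ?_
  · calc volume S ≤ volume (Icc (sInf S) (sSup S)) := measure_mono h1
      _ = ENNReal.ofReal (sSup S - sInf S) := Real.volume_Icc
  · calc ENNReal.ofReal (sSup S - sInf S) = volume (Ioo (sInf S) (sSup S)) := Real.volume_Ioo.symm
      _ ≤ volume S := measure_mono h2

lemma conv_vol_add {S T : Set ℝ} (hS : Convex ℝ S) (hT : Convex ℝ T)
    (hbS : Bornology.IsBounded S) (hbT : Bornology.IsBounded T)
    (hneS : S.Nonempty) (hneT : T.Nonempty) :
    volume S + volume T ≤ volume (S + T) := by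
  have hsum : Convex ℝ (S + T) := hS.add hT
  have hbsum : Bornology.IsBounded (S + T) := hbS.add hbT
  have hnesum : (S + T).Nonempty := hneS.add hneT
  rw [conv_vol hS hbS hneS, conv_vol hT hbT hneT, conv_vol hsum hbsum hnesum,
    csSup_add hneS hbS.bddAbove hneT hbT.bddAbove,
    csInf_add hneS hbS.bddBelow hneT hbT.bddBelow, ← ENNReal.ofReal_add]
  · ring_nf; exact le_of_eq rfl
  · simp [sub_nonneg]; exact csInf_le_csSup hneS hbS.bddBelow hbS.bddAbove
  · simp [sub_nonneg]; exact csInf_le_csSup hneT hbT.bddBelow hbT.bddAbove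
open MeasureTheory Real Set Pointwise

noncomputable def sl (A : Set (ℝ × ℝ)) (x : ℝ) : Set ℝ := {y | (x, y) ∈ A}
noncomputable def slf (A : Set (ℝ × ℝ)) (x : ℝ) : ℝ := (volume (sl A x)).toReal

lemma sl_convex {A : Set (ℝ × ℝ)} (hA : Convex ℝ A) (x : ℝ) : Convex ℝ (sl A x) := by
  intro y1 h1 y2 h2 a b ha hb hab
  have := hA h1 h2 ha hb hab
  have hx : a * x + b * x = x := by rw [← add_mul, hab, one_mul]
  simpa [sl, Prod.smul_mk, Prod.mk_add_mk, hx] using this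

lemma sl_compact {A : Set (ℝ × ℝ)} (hA : IsCompact A) (x : ℝ) : IsCompact (sl A x) := by
  have hcl : IsClosed (sl A x) := hA.isClosed.preimage (Continuous.prodMk_right x)
  exact (hA.image continuous_snd).of_isClosed_subset hcl
    (fun y hy => ⟨(x, y), hy, rfl⟩)

lemma vol_eq_lint_sl {A : Set (ℝ × ℝ)} (hA : MeasurableSet A) :
    volume A = ∫⁻ x, volume (sl A x) := by
  rw [Measure.volume_eq_prod, Measure.prod_apply hA]; rfl

lemma meas_sl {A : Set (ℝ × ℝ)} (hA : MeasurableSet A) :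
    Measurable fun x => volume (sl A x) :=
  measurable_measure_prodMk_left hA

lemma bounded_vol_ne_top {S : Set ℝ} (hb : Bornology.IsBounded S) : volume S ≠ ⊤ := by
  obtain ⟨R, hR⟩ := isBounded_iff_forall_norm_le.1 hb
  have : S ⊆ Icc (-R) R := fun x hx => abs_le.1 (hR x hx)
  exact ((measure_mono this).trans_lt (by simp [Real.volume_Icc])).ne

lemma key_ineq {S T U : Set ℝ} (hS : Convex ℝ S) (hT : Convex ℝ T)
    (hbS : Bornology.IsBounded S) (hbT : Bornology.IsBounded T)
    (hneS : S.Nonempty) (hneT : T.Nonempty) (hsub : S + T ⊆ U) (hU : volume U ≠ ⊤) :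
    (volume S).toReal + (volume T).toReal ≤ (volume U).toReal := by
  have h1 : volume S + volume T ≤ volume U :=
    (conv_vol_add hS hT hbS hbT hneS hneT).trans (measure_mono hsub)
  rw [← ENNReal.toReal_add (bounded_vol_ne_top hbS) (bounded_vol_ne_top hbT)]
  exact ENNReal.toReal_mono hU h1

lemma slf_nonneg (A : Set (ℝ × ℝ)) (x : ℝ) : 0 ≤ slf A x := ENNReal.toReal_nonneg

lemma slf_superadd {A B : Set (ℝ × ℝ)} (hA : Convex ℝ A) (hB : Convex ℝ B)
    (hAc : IsCompact A) (hBc : IsCompact B) {x1 x2 : ℝ}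
    (h1 : (sl A x1).Nonempty) (h2 : (sl B x2).Nonempty) :
    slf A x1 + slf B x2 ≤ slf (A + B) (x1 + x2) := by
  have hsub : sl A x1 + sl B x2 ⊆ sl (A + B) (x1 + x2) := by
    rintro y ⟨y1, hy1, y2, hy2, rfl⟩
    exact ⟨(x1, y1), hy1, (x2, y2), hy2, rfl⟩
  exact key_ineq (sl_convex hA x1) (sl_convex hB x2) (sl_compact hAc x1).isBounded
    (sl_compact hBc x2).isBounded h1 h2 hsub (sl_compact (hAc.add hBc) _).measure_lt_top.ne

lemma slf_concave {A : Set (ℝ × ℝ)} (hA : Convex ℝ A) (hAc : IsCompact A) {x1 x2 a b : ℝ}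
    (ha : 0 ≤ a) (hb : 0 ≤ b) (hab : a + b = 1)
    (h1 : (sl A x1).Nonempty) (h2 : (sl A x2).Nonempty) :
    a * slf A x1 + b * slf A x2 ≤ slf A (a * x1 + b * x2) := by
  have hsub : a • sl A x1 + b • sl A x2 ⊆ sl A (a * x1 + b * x2) := by
    rintro y ⟨y1, ⟨z1, hz1, rfl⟩, y2, ⟨z2, hz2, rfl⟩, rfl⟩
    have := hA hz1 hz2 ha hb hab
    simpa [sl, Prod.smul_mk, Prod.mk_add_mk] using this
  have hvs : ∀ (c : ℝ) (S : Set ℝ), 0 ≤ c → IsCompact S →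
      (volume (c • S)).toReal = c * (volume S).toReal := by
    intro c S hc hSc
    rw [Measure.addHaar_smul]
    simp [ENNReal.toReal_mul, abs_of_nonneg hc,
      ENNReal.toReal_ofReal hc, hSc.measure_lt_top.ne]
  have h := key_ineq ((sl_convex hA x1).smul a) ((sl_convex hA x2).smul b)
    ((sl_compact hAc x1).isBounded.smul₀ a) ((sl_compact hAc x2).isBounded.smul₀ b)
    (h1.smul_set) (h2.smul_set) hsub (sl_compact hAc _).measure_lt_top.ne
  rwa [hvs a _ ha (sl_compact hAc x1), hvs b _ hb (sl_compact hAc x2)] at h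

noncomputable def Ls (A : Set (ℝ × ℝ)) (s : ℝ) : Set ℝ := {x | s < slf A x}

lemma sl_nonempty_of_mem_Ls {A : Set (ℝ × ℝ)} {s x : ℝ} (hs : 0 ≤ s) (hx : x ∈ Ls A s) :
    (sl A x).Nonempty := by
  have : volume (sl A x) ≠ 0 := by
    intro h
    have : slf A x = 0 := by simp [slf, h]
    have := hx
    simp only [Ls, mem_setOf_eq] at this
    linarith
  exact nonempty_of_measure_ne_zero this

lemma Ls_convex {A : Set (ℝ × ℝ)} (hA : Convex ℝ A) (hAc : IsCompact A) {s : ℝ} (hs : 0 ≤ s) :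
    Convex ℝ (Ls A s) := by
  intro x1 h1 x2 h2 a b ha hb hab
  have hn1 := sl_nonempty_of_mem_Ls hs h1
  have hn2 := sl_nonempty_of_mem_Ls hs h2
  have hcon := slf_concave hA hAc ha hb hab hn1 hn2
  have e1 : s < slf A x1 := h1
  have e2 : s < slf A x2 := h2
  show s < slf A (a • x1 + b • x2)
  have : a * s + b * s ≤ a * slf A x1 + b * slf A x2 ∧ a * s + b * s ≠ a * slf A x1 + b * slf A x2 ∨
      True := Or.inr trivial
  rcases eq_or_lt_of_le ha with rfl | hapos
  · simp only [zero_add] at hab; subst hab; simpa using e2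
  rcases eq_or_lt_of_le hb with rfl | hbpos
  · simp only [add_zero] at hab; subst hab; simpa using e1
  have : s = a * s + b * s := by rw [← add_mul, hab, one_mul]
  rw [this]
  calc a * s + b * s < a * slf A x1 + b * slf A x2 := by
        apply add_lt_add
        · exact (mul_lt_mul_iff_right₀ hapos).2 e1
        · exact (mul_lt_mul_iff_right₀ hbpos).2 e2
    _ ≤ slf A (a * x1 + b * x2) := hcon
    _ = slf A (a • x1 + b • x2) := rfl

lemma Ls_bounded {A : Set (ℝ × ℝ)} (hAc : IsCompact A) {s : ℝ} (hs : 0 ≤ s) :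
    Bornology.IsBounded (Ls A s) := by
  have hsub : Ls A s ⊆ Prod.fst '' A := by
    intro x hx
    obtain ⟨y, hy⟩ := sl_nonempty_of_mem_Ls hs hx
    exact ⟨(x, y), hy, rfl⟩
  exact (hAc.image continuous_fst).isBounded.subset hsub

lemma Ls_antitone (A : Set (ℝ × ℝ)) : Antitone fun s => volume (Ls A s) := by
  intro s t hst
  exact measure_mono fun x hx => lt_of_le_of_lt hst hx

lemma slf_bdd {A : Set (ℝ × ℝ)} (hAc : IsCompact A) : BddAbove (range (slf A)) := by
  obtain ⟨R, hR⟩ := isBounded_iff_forall_norm_le.1 hAc.isBounded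
  refine ⟨max (2 * R) 0, ?_⟩
  rintro _ ⟨x, rfl⟩
  have hsub : sl A x ⊆ Icc (-R) R := by
    intro y hy
    have h1 : ‖y‖ ≤ ‖((x, y) : ℝ × ℝ)‖ := norm_snd_le ((x, y) : ℝ × ℝ)
    have h2 := hR _ hy
    exact abs_le.1 (h1.trans h2)
  have : volume (sl A x) ≤ ENNReal.ofReal (2 * R) := by
    calc volume (sl A x) ≤ volume (Icc (-R) R) := measure_mono hsub
      _ = ENNReal.ofReal (R - -R) := Real.volume_Icc
      _ = ENNReal.ofReal (2 * R) := by ring_nf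
  calc slf A x ≤ (ENNReal.ofReal (2 * R)).toReal :=
        ENNReal.toReal_mono ENNReal.ofReal_ne_top this
    _ ≤ max (2 * R) 0 := by
        rcases le_or_gt 0 (2 * R) with h | h
        · rw [ENNReal.toReal_ofReal h]; exact le_max_left _ _
        · rw [ENNReal.ofReal_of_nonpos h.le]; simp

lemma Ls_empty_of_ge {A : Set (ℝ × ℝ)} (hAc : IsCompact A) {s : ℝ}
    (hs : ⨆ x, slf A x ≤ s) : Ls A s = ∅ := by
  ext x
  simp only [Ls, mem_setOf_eq, mem_empty_iff_false, iff_false, not_lt]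
  exact (le_ciSup (slf_bdd hAc) x).trans hs

lemma Ls_nonempty_of_lt {A : Set (ℝ × ℝ)} (hAc : IsCompact A) {s : ℝ}
    (hs : s < ⨆ x, slf A x) : (Ls A s).Nonempty := by
  obtain ⟨x, hx⟩ := (lt_ciSup_iff (slf_bdd hAc)).1 hs
  exact ⟨x, hx⟩

lemma iSup_slf_pos {A : Set (ℝ × ℝ)} (hAc : IsCompact A) (hApos : volume A ≠ 0) :
    0 < ⨆ x, slf A x := by
  by_contra h
  push_neg at h
  have hz : ∀ x, slf A x = 0 := fun x =>
    le_antisymm ((le_ciSup (slf_bdd hAc) x).trans h) (slf_nonneg A x)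
  have hvz : ∀ x, volume (sl A x) = 0 := by
    intro x
    have hfin := ((sl_compact hAc x).measure_lt_top (μ := volume)).ne
    have := hz x
    simpa [slf, ENNReal.toReal_eq_zero_iff, hfin] using this
  apply hApos
  rw [vol_eq_lint_sl hAc.isClosed.measurableSet]
  simp [hvz]

lemma vol_eq_lint_Ls {A : Set (ℝ × ℝ)} (hAc : IsCompact A) :
    volume A = ∫⁻ t in Ioi (0:ℝ), volume (Ls A t) := by
  have hm := hAc.isClosed.measurableSet
  rw [vol_eq_lint_sl hm]
  have h1 : ∀ x, volume (sl A x) = ENNReal.ofReal (slf A x) := fun x =>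
    (ENNReal.ofReal_toReal (sl_compact hAc x).measure_lt_top.ne).symm
  simp_rw [h1]
  exact lintegral_eq_lintegral_meas_lt volume (Filter.Eventually.of_forall (slf_nonneg A))
    ((meas_sl hm).ennreal_toReal.aemeasurable)

lemma lint_comp_mul {g : ℝ → ℝ≥0∞} (hg : Measurable g) {c : ℝ} (hc : 0 < c) :
    ∫⁻ t in Ioi (0:ℝ), g (c * t) = ENNReal.ofReal c⁻¹ * ∫⁻ s in Ioi (0:ℝ), g s := by
  have hmeas : MeasurableSet (Ioi (0:ℝ)) := measurableSet_Ioi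
  have key : ∀ t : ℝ, (Ioi (0:ℝ)).indicator (fun t => g (c * t)) t
      = (Ioi (0:ℝ)).indicator g (c * t) := by
    intro t
    by_cases ht : t ∈ Ioi (0:ℝ)
    · rw [indicator_of_mem ht, indicator_of_mem (by exact mul_pos hc ht)]
    · rw [indicator_of_notMem ht, indicator_of_notMem]
      simp only [mem_Ioi, not_lt] at ht ⊢
      exact mul_nonpos_of_nonneg_of_nonpos hc.le ht
  rw [← lintegral_indicator hmeas, ← lintegral_indicator hmeas]
  simp_rw [key]
  have hmap := Real.map_volume_mul_left (ne_of_gt hc)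
  have hind : Measurable ((Ioi (0:ℝ)).indicator g) := hg.indicator hmeas
  calc ∫⁻ t, (Ioi (0:ℝ)).indicator g (c * t) ∂volume
      = ∫⁻ t, (Ioi (0:ℝ)).indicator g t ∂(Measure.map (fun x => c * x) volume) :=
        (lintegral_map hind (measurable_const_mul c)).symm
    _ = ENNReal.ofReal |c⁻¹| * ∫⁻ t, (Ioi (0:ℝ)).indicator g t ∂volume := by
        rw [hmap]; simp [lintegral_smul_measure]
    _ = ENNReal.ofReal c⁻¹ * ∫⁻ t, (Ioi (0:ℝ)).indicator g t ∂volume := by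
        rw [abs_of_nonneg (inv_nonneg.2 hc.le)]

theorem bm2d {A B : Set (ℝ × ℝ)} (hA : Convex ℝ A) (hB : Convex ℝ B)
    (hAc : IsCompact A) (hBc : IsCompact B) (hAne : A.Nonempty) (hBne : B.Nonempty)
    (hV : volume A = volume B) : 4 * volume A ≤ volume (A + B) := by
  rcases eq_or_ne (volume A) 0 with hA0 | hA0
  · -- trivial case: contains a translate of B
    obtain ⟨a, ha⟩ := hAne
    have : (a, 0).1 = a := rfl
    have hsub : (fun y => a + y) '' B ⊆ A + B := by
      rintro _ ⟨y, hy, rfl⟩; exact ⟨a, ha, y, hy, rfl⟩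
    rw [hA0, mul_zero]
    exact bot_le
  -- nontrivial case
  set F := ⨆ x, slf A x with hF
  set G := ⨆ x, slf B x with hG
  have hB0 : volume B ≠ 0 := hV ▸ hA0
  have hFpos : 0 < F := iSup_slf_pos hAc hA0
  have hGpos : 0 < G := iSup_slf_pos hBc hB0
  have hFG : 0 < F + G := by linarith
  set l : ℝ := F / (F + G) with hl
  set m : ℝ := G / (F + G) with hm
  have hlpos : 0 < l := div_pos hFpos hFG
  have hmpos : 0 < m := div_pos hGpos hFG
  have hlm : l + m = 1 := by rw [hl, hm, ← add_div, div_self (ne_of_gt hFG)]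
  have hABc : IsCompact (A + B) := hAc.add hBc
  have hABconv : Convex ℝ (A + B) := hA.add hB
  -- pointwise superlevel inequality
  have hpt : ∀ t ∈ Ioi (0:ℝ),
      volume (Ls A (l * t)) + volume (Ls B (m * t)) ≤ volume (Ls (A + B) t) := by
    intro t ht
    have ht0 : 0 < t := ht
    rcases lt_or_ge t (F + G) with hcase | hcase
    · have hlt : l * t < F := by
        rw [hl, div_mul_eq_mul_div, div_lt_iff₀ hFG]
        calc F * t < F * (F + G) := by exact (mul_lt_mul_iff_right₀ hFpos).2 hcase
          _ = F * (F + G) := rfl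
      have hmt : m * t < G := by
        rw [hm, div_mul_eq_mul_div, div_lt_iff₀ hFG]
        exact (mul_lt_mul_iff_right₀ hGpos).2 hcase
      have hneA : (Ls A (l * t)).Nonempty := Ls_nonempty_of_lt hAc hlt
      have hneB : (Ls B (m * t)).Nonempty := Ls_nonempty_of_lt hBc hmt
      have hlt0 : (0:ℝ) ≤ l * t := (mul_pos hlpos ht0).le
      have hmt0 : (0:ℝ) ≤ m * t := (mul_pos hmpos ht0).le
      have hsub : Ls A (l * t) + Ls B (m * t) ⊆ Ls (A + B) t := by
        rintro _ ⟨x1, hx1, x2, hx2, rfl⟩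
        have hn1 := sl_nonempty_of_mem_Ls hlt0 hx1
        have hn2 := sl_nonempty_of_mem_Ls hmt0 hx2
        have := slf_superadd hA hB hAc hBc hn1 hn2
        show t < slf (A + B) (x1 + x2)
        have e1 : l * t < slf A x1 := hx1
        have e2 : m * t < slf B x2 := hx2
        have : l * t + m * t ≤ slf (A + B) (x1 + x2) → t < slf (A+B) (x1+x2) := by
          intro h
          nlinarith [hx1, hx2]
        nlinarith [slf_superadd hA hB hAc hBc hn1 hn2, e1, e2]
      calc volume (Ls A (l * t)) + volume (Ls B (m * t))
          ≤ volume (Ls A (l * t) + Ls B (m * t)) :=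
            conv_vol_add (Ls_convex hA hAc hlt0) (Ls_convex hB hBc hmt0)
              (Ls_bounded hAc hlt0) (Ls_bounded hBc hmt0) hneA hneB
        _ ≤ volume (Ls (A + B) t) := measure_mono hsub
    · have h1 : Ls A (l * t) = ∅ := by
        apply Ls_empty_of_ge hAc
        rw [hl, div_mul_eq_mul_div, le_div_iff₀ hFG]
        exact mul_le_mul_of_nonneg_left hcase hFpos.le
      have h2 : Ls B (m * t) = ∅ := by
        apply Ls_empty_of_ge hBc
        rw [hm, div_mul_eq_mul_div, le_div_iff₀ hFG]
        exact mul_le_mul_of_nonneg_left hcase hGpos.le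
      simp [h1, h2]
  -- measurability of the superlevel volume functions
  have hmA : Measurable fun s => volume (Ls A s) := (Ls_antitone A).measurable
  have hmB : Measurable fun s => volume (Ls B s) := (Ls_antitone B).measurable
  have hintA : ∫⁻ t in Ioi (0:ℝ), volume (Ls A (l * t))
      = ENNReal.ofReal l⁻¹ * volume A := by
    rw [lint_comp_mul hmA hlpos, ← vol_eq_lint_Ls hAc]
  have hintB : ∫⁻ t in Ioi (0:ℝ), volume (Ls B (m * t))
      = ENNReal.ofReal m⁻¹ * volume B := by
    rw [lint_comp_mul hmB hmpos, ← vol_eq_lint_Ls hBc]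
  have hchain : ENNReal.ofReal l⁻¹ * volume A + ENNReal.ofReal m⁻¹ * volume B
      ≤ volume (A + B) := by
    have hadd := lintegral_add_left (μ := volume.restrict (Ioi (0:ℝ)))
      (hmA.comp (measurable_const_mul l)) (fun t => volume (Ls B (m * t)))
    simp only [Function.comp] at hadd
    rw [← hintA, ← hintB, ← hadd, vol_eq_lint_Ls hABc]
    exact setLIntegral_mono ((Ls_antitone (A+B)).measurable) hpt
  have hge4 : (4:ℝ) ≤ l⁻¹ + m⁻¹ := by
    rw [hl, hm]
    rw [inv_div, inv_div]
    rw [div_add_div _ _ (ne_of_gt hFpos) (ne_of_gt hGpos)]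
    rw [le_div_iff₀ (mul_pos hFpos hGpos)]
    nlinarith [sq_nonneg (F - G)]
  calc 4 * volume A = ENNReal.ofReal 4 * volume A := by norm_num
    _ ≤ ENNReal.ofReal (l⁻¹ + m⁻¹) * volume A :=
        mul_le_mul_left (ENNReal.ofReal_le_ofReal hge4) _
    _ = ENNReal.ofReal l⁻¹ * volume A + ENNReal.ofReal m⁻¹ * volume B := by
        rw [ENNReal.ofReal_add (by positivity) (by positivity), add_mul, hV]
    _ ≤ volume (A + B) := hchain

def nrotL (θ : ℝ) : E2 →ₗ[ℝ] E2 where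
  toFun y := -rot θ y
  map_add' x y := by
    ext i
    fin_cases i <;>
      simp [rot, WithLp.equiv_symm_apply, PiLp.toLp_apply, PiLp.add_apply, PiLp.smul_apply, PiLp.neg_apply,
        smul_eq_mul, Matrix.cons_val_zero, Matrix.cons_val_one, Matrix.head_cons] <;> ring
  map_smul' c x := by
    ext i
    fin_cases i <;>
      simp [rot, WithLp.equiv_symm_apply, PiLp.toLp_apply, PiLp.add_apply, PiLp.smul_apply, PiLp.neg_apply,
        smul_eq_mul, Matrix.cons_val_zero, Matrix.cons_val_one, Matrix.head_cons] <;> ring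

def phiL : E2 →ₗ[ℝ] ℝ × ℝ where
  toFun x := (x 0, x 1)
  map_add' x y := rfl
  map_smul' c x := rfl


lemma nrotL_det (θ : ℝ) : LinearMap.det (nrotL θ) = 1 := by
  let b := (EuclideanSpace.basisFun (Fin 2) ℝ).toBasis
  rw [← LinearMap.det_toMatrix b]
  rw [Matrix.det_fin_two]
  simp [LinearMap.toMatrix_apply, b, nrotL, rot, EuclideanSpace.basisFun_apply,
    WithLp.equiv_symm_apply, PiLp.toLp_apply, PiLp.neg_apply, EuclideanSpace.single_apply]
  nlinarith [sin_sq_add_cos_sq θ]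

lemma vol_nrot (θ : ℝ) (S : Set E2) : volume ((fun y => -rot θ y) '' S) = volume S := by
  have h := MeasureTheory.Measure.addHaar_image_linearMap (μ := volume) (nrotL θ) S
  have hc : ⇑(nrotL θ) = fun y => -rot θ y := rfl
  rw [hc] at h
  rw [h, nrotL_det]
  simp

lemma neg_rot_pi (y : E2) : -rot π y = y := by
  ext i
  fin_cases i <;>
    simp [rot, WithLp.equiv_symm_apply, PiLp.toLp_apply, PiLp.neg_apply, Real.cos_pi, Real.sin_pi]

def ψ : E2 ≃ᵐ ℝ × ℝ :=
  (MeasurableEquiv.toLp 2 (Fin 2 → ℝ)).symm.trans MeasurableEquiv.finTwoArrow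

lemma ψ_mp : MeasurePreserving ψ volume volume :=
  (volume_preserving_finTwoArrow ℝ).comp (EuclideanSpace.volume_preserving_symm_measurableEquiv_toLp (Fin 2))

lemma ψ_eq_phiL : ⇑ψ = ⇑phiL := rfl

lemma vol_ψ_image {S : Set E2} (hS : MeasurableSet S) : volume (ψ '' S) = volume S := by
  rw [MeasurableEquiv.image_eq_preimage_symm]
  exact (ψ_mp.symm ψ).measure_preimage hS.nullMeasurableSet

lemma ψ_image_add (S T : Set E2) : ψ '' (S + T) = ψ '' S + ψ '' T := by
  ext p
  constructor
  · rintro ⟨_, ⟨x, hx, y, hy, rfl⟩, rfl⟩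
    exact ⟨ψ x, ⟨x, hx, rfl⟩, ψ y, ⟨y, hy, rfl⟩, rfl⟩
  · rintro ⟨_, ⟨x, hx, rfl⟩, _, ⟨y, hy, rfl⟩, rfl⟩
    exact ⟨x + y, ⟨x, hx, y, hy, rfl⟩, rfl⟩

theorem stmt3 (M : Set E2) (hne : M.Nonempty) (hcpt : IsCompact M) (hconv : Convex ℝ M)
    (θ : ℝ) : Ex π M ≤ Ex θ M := by
  have hD : ∀ φ : ℝ, {p : E2 | ∃ x ∈ M, ∃ y ∈ M, p = x - rot φ y}
      = M + (fun y => -rot φ y) '' M := by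
    intro φ
    ext p
    simp only [Set.mem_setOf_eq, Set.mem_add, Set.mem_image]
    constructor
    · rintro ⟨x, hx, y, hy, rfl⟩
      exact ⟨x, hx, -rot φ y, ⟨y, hy, rfl⟩, (sub_eq_add_neg x (rot φ y)).symm⟩
    · rintro ⟨x, hx, _, ⟨y, hy, rfl⟩, rfl⟩
      exact ⟨x, hx, y, hy, (sub_eq_add_neg x (rot φ y))⟩
  set Nθ := (fun y => -rot θ y) '' M with hNθ
  have hcoe : ⇑(nrotL θ) = fun y => -rot θ y := rfl
  have hNc : IsCompact Nθ := hcpt.image ((nrotL θ).continuous_of_finiteDimensional.congr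
    (fun y => rfl))
  have hNconv : Convex ℝ Nθ := by
    rw [hNθ, ← hcoe]
    exact hconv.linear_image (nrotL θ)
  have hNne : Nθ.Nonempty := hne.image _
  have hNvol : volume Nθ = volume M := vol_nrot θ M
  have hsum_c : IsCompact (M + Nθ) := hcpt.add hNc
  have hExθ : Ex θ M = (volume (M + Nθ)).toReal := by rw [Ex, hD θ]
  have hNπ : (fun y => -rot π y) '' M = M := by
    have : (fun y : E2 => -rot π y) = id := funext neg_rot_pi
    rw [this, Set.image_id]
  have hExπ : Ex π M = (volume (M + M)).toReal := by rw [Ex, hD π, hNπ]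
  have h2 : M + M = (2 : ℝ) • M := by
    have h := hconv.add_smul (zero_le_one) (zero_le_one)
    rw [one_add_one_eq_two] at h
    rw [h, one_smul]
  have hvol2 : volume (M + M) = 4 * volume M := by
    rw [h2, Measure.addHaar_smul]
    norm_num [finrank_euclideanSpace_fin]
  -- transfer to ℝ × ℝ
  have hphic : Continuous ⇑phiL := phiL.continuous_of_finiteDimensional
  set A := ψ '' M with hA
  set B := ψ '' Nθ with hB
  have hAeq : A = ⇑phiL '' M := by rw [hA, ψ_eq_phiL]
  have hBeq : B = ⇑phiL '' Nθ := by rw [hB, ψ_eq_phiL]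
  have hAc : IsCompact A := by rw [hAeq]; exact hcpt.image hphic
  have hBc : IsCompact B := by rw [hBeq]; exact hNc.image hphic
  have hAconv : Convex ℝ A := by rw [hAeq]; exact hconv.linear_image phiL
  have hBconv : Convex ℝ B := by rw [hBeq]; exact hNconv.linear_image phiL
  have hAne : A.Nonempty := hne.image _
  have hBne : B.Nonempty := hNne.image _
  have hAM : volume A = volume M := vol_ψ_image hcpt.isClosed.measurableSet
  have hBN : volume B = volume Nθ := vol_ψ_image hNc.isClosed.measurableSet
  have hVAB : volume A = volume B := by rw [hAM, hBN, hNvol]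
  have h4 : 4 * volume A ≤ volume (A + B) := bm2d hAconv hBconv hAc hBc hAne hBne hVAB
  have hABMN : volume (A + B) = volume (M + Nθ) := by
    rw [hA, hB, ← ψ_image_add, vol_ψ_image hsum_c.isClosed.measurableSet]
  have hfinal : 4 * volume M ≤ volume (M + Nθ) := by
    rw [← hAM, ← hABMN]
    exact h4
  rw [hExπ, hExθ, hvol2]
  exact ENNReal.toReal_mono hsum_c.measure_lt_top.ne hfinal
end
end

section
/- Let M be a convex body in ℝⁿ. Then the excluded volume function Ex(·,M) : SO(n) → ℝ, R ↦ vol(M − R M), is Lipschitz: there exists L ≥ 0 such that |Ex(R,M) − Ex(R′,M)| ≤ L·‖R − R′‖ for all R, R′ ∈ SO(n), where ‖·‖ is the operator norm on linear maps of ℝⁿ. -/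
open MeasureTheory Real

noncomputable section

/-- Apply an `n × n` real matrix to a vector of `EuclideanSpace ℝ (Fin n)`. -/
def applyMat {n : ℕ} (A : Matrix (Fin n) (Fin n) ℝ) (y : EuclideanSpace ℝ (Fin n)) :
    EuclideanSpace ℝ (Fin n) :=
  (EuclideanSpace.equiv (Fin n) ℝ).symm (A.mulVec ((EuclideanSpace.equiv (Fin n) ℝ) y))

/-- The excluded volume of `M` at relative orientation given by the matrix `A`:
the volume of the difference body `M - A M`. -/
def ExVol {n : ℕ} (M : Set (EuclideanSpace ℝ (Fin n)))
    (A : Matrix (Fin n) (Fin n) ℝ) : ℝ :=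
  (volume {p : EuclideanSpace ℝ (Fin n) | ∃ x ∈ M, ∃ y ∈ M, p = x - applyMat A y}).toReal

section ExVolAux

open Set Pointwise Matrix

namespace ExVolAux

lemma interval_vol {I : Set ℝ} (hI : Convex ℝ I) {σ ε : ℝ} (hε : 0 ≤ ε) (hb : I ⊆ Set.Icc (-σ) σ) :
    volume (I + Set.Icc (-ε) ε) ≤ volume I + ENNReal.ofReal (2*ε) := by
  rcases I.eq_empty_or_nonempty with rfl | hne
  · simp
  have hbdd : BddAbove I := ⟨σ, fun x hx => (hb hx).2⟩
  have hbddb : BddBelow I := ⟨-σ, fun x hx => (hb hx).1⟩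
  have hab : sInf I ≤ sSup I := Real.sInf_le_sSup _ hbddb hbdd
  have h1 : I + Set.Icc (-ε) ε ⊆ Set.Icc (sInf I - ε) (sSup I + ε) := by
    rintro z ⟨p, hp, q, hq, rfl⟩
    have h1 := csInf_le hbddb hp
    have h2 := le_csSup hbdd hp
    simp only [mem_Icc] at hq ⊢
    constructor <;> [linarith [hq.1]; linarith [hq.2]]
  have h2 : Set.Ioo (sInf I) (sSup I) ⊆ I := by
    intro x hx
    obtain ⟨p, hp, hpx⟩ := (csInf_lt_iff hbddb hne).1 hx.1
    obtain ⟨q, hq, hxq⟩ := (lt_csSup_iff hbdd hne).1 hx.2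
    exact hI.ordConnected.out hp hq ⟨le_of_lt hpx, le_of_lt hxq⟩
  calc volume (I + Set.Icc (-ε) ε) ≤ volume (Set.Icc (sInf I - ε) (sSup I + ε)) := measure_mono h1
    _ = ENNReal.ofReal ((sSup I - sInf I) + 2*ε) := by rw [Real.volume_Icc]; ring_nf
    _ ≤ ENNReal.ofReal (sSup I - sInf I) + ENNReal.ofReal (2*ε) := ENNReal.ofReal_add_le
    _ ≤ volume I + ENNReal.ofReal (2*ε) := by
        gcongr
        rw [← Real.volume_Ioo]; exact measure_mono h2


def seg {n : ℕ} (i : Fin n) (ε : ℝ) : Set (Fin n → ℝ) := (fun t => Pi.single i t) '' Set.Icc (-ε) ε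

def cube (n : ℕ) (r : ℝ) : Set (Fin n → ℝ) := Set.univ.pi (fun _ : Fin n => Set.Icc (-r) r)

lemma seg_compact {n : ℕ} (i : Fin n) (ε : ℝ) : IsCompact (seg i ε) := by
  apply isCompact_Icc.image
  apply continuous_pi; intro j
  simp only [Pi.single_apply]
  by_cases h : j = i <;> simp [h] <;> fun_prop

lemma seg_convex {n : ℕ} (i : Fin n) (ε : ℝ) : Convex ℝ (seg i ε) := by
  have : seg i ε = (LinearMap.single ℝ (fun _ : Fin n => ℝ) i) '' Set.Icc (-ε) ε := rfl
  rw [this]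
  exact (convex_Icc _ _).linear_image _

lemma insertNth_affine {m : ℕ} (i : Fin (m+1)) {a b : ℝ} (t₁ t₂ : ℝ) (y : Fin m → ℝ)
    (hab : a + b = 1) :
    (i.insertNth (a*t₁ + b*t₂) y : Fin (m+1) → ℝ)
      = a • (i.insertNth t₁ y : Fin (m+1) → ℝ) + b • (i.insertNth t₂ y : Fin (m+1) → ℝ) := by
  funext j
  refine Fin.succAboveCases i ?_ (fun k => ?_) j
  · simp [Fin.insertNth_apply_same]
  · simp only [Fin.insertNth_apply_succAbove, Pi.add_apply, Pi.smul_apply, smul_eq_mul]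
    linear_combination (y k) * hab.symm







lemma step {m : ℕ} {C : Set (Fin (m+1) → ℝ)} (hCc : IsCompact C) (hCv : Convex ℝ C)
    {σ ε : ℝ} (hε : 0 ≤ ε) (hσ : 0 ≤ σ) (hC : C ⊆ cube (m+1) σ) (i : Fin (m+1)) :
    volume (C + seg i ε) ≤ volume C + ENNReal.ofReal (2*ε) * ENNReal.ofReal ((2*σ)^m) := by
  set e := MeasurableEquiv.piFinSuccAbove (fun _ : Fin (m+1) => ℝ) i with he
  have hmp : MeasurePreserving e volume volume :=
    volume_preserving_piFinSuccAbove (fun _ : Fin (m+1) => ℝ) i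
  have he_single : ∀ u : ℝ, e (Pi.single i u) = (u, 0) := by
    intro u
    ext1
    · simp [he, MeasurableEquiv.piFinSuccAbove_apply, Fin.insertNthEquiv]
    · funext j
      simp [he, MeasurableEquiv.piFinSuccAbove_apply, Fin.insertNthEquiv, Fin.removeNth,
        Pi.single_eq_of_ne (Fin.succAbove_ne i j)]
  have he_add : ∀ x y : Fin (m+1) → ℝ, e (x + y) = e x + e y := fun x y => rfl
  have hCmeas : MeasurableSet C := hCc.isClosed.measurableSet
  have hCSc : IsCompact (C + seg i ε) := hCc.add (seg_compact i ε)
  have hCSmeas : MeasurableSet (C + seg i ε) := hCSc.isClosed.measurableSet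
  set A := e '' C with hA
  set S := e '' (C + seg i ε) with hS
  have hA_meas : MeasurableSet A := by
    rw [hA, MeasurableEquiv.image_eq_preimage_symm]
    exact e.symm.measurable hCmeas
  have hS_meas : MeasurableSet S := by
    rw [hS, MeasurableEquiv.image_eq_preimage_symm]
    exact e.symm.measurable hCSmeas
  have volA : volume A = volume C := by
    rw [hA, MeasurableEquiv.image_eq_preimage_symm]
    exact (MeasurePreserving.symm e hmp).measure_preimage hCmeas.nullMeasurableSet
  have volS : volume S = volume (C + seg i ε) := by
    rw [hS, MeasurableEquiv.image_eq_preimage_symm]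
    exact (MeasurePreserving.symm e hmp).measure_preimage hCSmeas.nullMeasurableSet
  have hA_pre : ∀ (t : ℝ) (y : Fin m → ℝ), ((t, y) ∈ A ↔ (i.insertNth t y : Fin (m+1) → ℝ) ∈ C) := by
    intro t y
    rw [hA, MeasurableEquiv.image_eq_preimage_symm]
    rfl
  have hS_eq : S = A + (Set.Icc (-ε) ε) ×ˢ ({0} : Set (Fin m → ℝ)) := by
    rw [hS, hA]
    ext q
    constructor
    · rintro ⟨x, ⟨c, hc, s, ⟨u, hu, rfl⟩, rfl⟩, rfl⟩
      exact ⟨e c, ⟨c, hc, rfl⟩, (u, 0), ⟨hu, rfl⟩, by show e c + (u, 0) = e (c + Pi.single i u); rw [he_add, he_single u]⟩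
    · rintro ⟨a, ⟨c, hc, rfl⟩, ⟨u, v⟩, ⟨hu, hv⟩, rfl⟩
      refine ⟨c + Pi.single i u, ⟨c, hc, Pi.single i u, ⟨u, hu, rfl⟩, rfl⟩, ?_⟩
      rw [he_add, he_single u]
      simp only [mem_singleton_iff] at hv
      rw [hv]
  set sliceA := fun y : Fin m → ℝ => {t : ℝ | (t, y) ∈ A} with hsliceA
  have h_sliceS : ∀ y : Fin m → ℝ, {t : ℝ | (t, y) ∈ S} = sliceA y + Set.Icc (-ε) ε := by
    intro y
    ext t
    rw [hS_eq]
    constructor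
    · rintro ⟨⟨t', y'⟩, hA', ⟨u, v⟩, ⟨hu, hv⟩, h⟩
      simp only [mem_singleton_iff] at hv
      subst hv
      have h1 : t' + u = t := congrArg Prod.fst h
      have h2 : y' = y := by have := congrArg Prod.snd h; simpa using this
      subst h2
      exact ⟨t', hA', u, hu, h1⟩
    · rintro ⟨t', ht', u, hu, rfl⟩
      exact ⟨(t', y), ht', (u, 0), ⟨hu, rfl⟩, by simp⟩
  have h_conv : ∀ y : Fin m → ℝ, Convex ℝ (sliceA y) := by
    intro y t₁ h₁ t₂ h₂ a b ha hb hab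
    simp only [hsliceA, mem_setOf_eq, hA_pre] at h₁ h₂ ⊢
    rw [smul_eq_mul, smul_eq_mul, insertNth_affine i t₁ t₂ y hab]
    exact hCv h₁ h₂ ha hb hab
  have h_bdd : ∀ y : Fin m → ℝ, sliceA y ⊆ Set.Icc (-σ) σ := by
    intro y t ht
    simp only [hsliceA, mem_setOf_eq, hA_pre] at ht
    have := hC ht i (mem_univ i)
    rwa [Fin.insertNth_apply_same] at this
  have h_ybox : ∀ y : Fin m → ℝ, (sliceA y).Nonempty → y ∈ cube m σ := by
    rintro y ⟨t, ht⟩ j _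
    simp only [hsliceA, mem_setOf_eq, hA_pre] at ht
    have := hC ht (i.succAbove j) (mem_univ _)
    rwa [Fin.insertNth_apply_succAbove] at this
  have hcube_meas : MeasurableSet (cube m σ) :=
    MeasurableSet.univ_pi (fun _ => measurableSet_Icc)
  have h_integrand : ∀ y : Fin m → ℝ,
      volume {t : ℝ | (t, y) ∈ S} ≤ volume (sliceA y)
        + (cube m σ).indicator (fun _ => ENNReal.ofReal (2*ε)) y := by
    intro y
    rw [h_sliceS y]
    by_cases hne : (sliceA y).Nonempty
    · rw [Set.indicator_of_mem (h_ybox y hne)]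
      exact interval_vol (h_conv y) hε (h_bdd y)
    · rw [Set.not_nonempty_iff_eq_empty] at hne
      rw [hne]
      simp
  have hSvol : volume S = ∫⁻ y, volume {t : ℝ | (t, y) ∈ S} := by
    rw [MeasureTheory.Measure.volume_eq_prod, Measure.prod_apply_symm hS_meas]
    rfl
  have hAvol : volume A = ∫⁻ y, volume (sliceA y) := by
    rw [MeasureTheory.Measure.volume_eq_prod, Measure.prod_apply_symm hA_meas]
    rfl
  have hvolcube : volume (cube m σ) = ENNReal.ofReal ((2*σ)^m) := by
    rw [cube, volume_pi_pi]
    simp only [Real.volume_Icc]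
    rw [Finset.prod_const, Finset.card_univ, Fintype.card_fin,
      ← ENNReal.ofReal_pow (by linarith : (0:ℝ) ≤ σ - -σ)]
    congr 1
    ring
  calc volume (C + seg i ε) = volume S := volS.symm
    _ = ∫⁻ y, volume {t : ℝ | (t, y) ∈ S} := hSvol
    _ ≤ ∫⁻ y, (volume (sliceA y)
        + (cube m σ).indicator (fun _ => ENNReal.ofReal (2*ε)) y) := lintegral_mono h_integrand
    _ = (∫⁻ y, volume (sliceA y))
        + ∫⁻ y, (cube m σ).indicator (fun _ => ENNReal.ofReal (2*ε)) y :=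
      lintegral_add_right _ (measurable_const.indicator hcube_meas)
    _ = volume C + ENNReal.ofReal (2*ε) * ENNReal.ofReal ((2*σ)^m) := by
      rw [← hAvol, volA, lintegral_indicator_const hcube_meas, hvolcube]





lemma cube_mono {n : ℕ} {r r' : ℝ} (h : r ≤ r') : cube n r ⊆ cube n r' := by
  intro x hx j hj
  have := hx j hj
  simp only [mem_Icc] at this ⊢
  constructor <;> linarith [this.1, this.2]

lemma seg_subset_cube {n : ℕ} (i : Fin n) {ε : ℝ} (hε : 0 ≤ ε) : seg i ε ⊆ cube n ε := by
  rintro x ⟨t, ht, rfl⟩ j hj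
  simp only [mem_Icc] at ht ⊢
  rw [Pi.single_apply]
  split <;> constructor <;> linarith [ht.1, ht.2]

lemma cube_add_subset {n : ℕ} {a b : ℝ} : cube n a + cube n b ⊆ cube n (a + b) := by
  rintro x ⟨p, hp, q, hq, rfl⟩ j hj
  have h1 := hp j hj
  have h2 := hq j hj
  simp only [mem_Icc] at h1 h2 ⊢
  constructor <;> [skip; skip] <;> simp only [Pi.add_apply] <;> linarith [h1.1, h1.2, h2.1, h2.2]

lemma sum_seg_subset {n : ℕ} {ε : ℝ} (hε : 0 ≤ ε) (s : Finset (Fin n)) :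
    (∑ i ∈ s, seg i ε) ⊆ cube n (s.card * ε) := by
  induction s using Finset.induction_on with
  | empty =>
    rw [Finset.sum_empty, ← Set.singleton_zero]
    rintro x hx j hj
    rw [Set.mem_singleton_iff] at hx
    subst hx
    simp
  | @insert i s hi ih =>
    rw [Finset.sum_insert hi, Finset.card_insert_of_notMem hi]
    refine subset_trans (Set.add_subset_add (seg_subset_cube i hε) ih) ?_
    refine subset_trans cube_add_subset (cube_mono ?_)
    push_cast
    ring_nf
    linarith

lemma sum_seg_compact {n : ℕ} {ε : ℝ} (s : Finset (Fin n)) :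
    IsCompact (∑ i ∈ s, seg i ε) := by
  induction s using Finset.induction_on with
  | empty =>
    rw [Finset.sum_empty, ← Set.singleton_zero]
    exact isCompact_singleton
  | @insert i s hi ih =>
    rw [Finset.sum_insert hi]
    exact (seg_compact i ε).add ih

lemma sum_seg_convex {n : ℕ} {ε : ℝ} (s : Finset (Fin n)) :
    Convex ℝ (∑ i ∈ s, seg i ε) := by
  induction s using Finset.induction_on with
  | empty =>
    rw [Finset.sum_empty, ← Set.singleton_zero]
    exact convex_singleton 0
  | @insert i s hi ih =>
    rw [Finset.sum_insert hi]
    exact (seg_convex i ε).add ih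

lemma mem_sum_seg {n : ℕ} {ε : ℝ} (s : Finset (Fin n)) (x : Fin n → ℝ)
    (h1 : ∀ j, |x j| ≤ ε) (h2 : ∀ j, j ∉ s → x j = 0) :
    x ∈ ∑ i ∈ s, seg i ε := by
  induction s using Finset.induction_on generalizing x with
  | empty =>
    have : x = 0 := funext fun j => h2 j (Finset.notMem_empty j)
    subst this
    rw [Finset.sum_empty, ← Set.singleton_zero]
    exact Set.mem_singleton 0
  | @insert i s hi ih =>
    rw [Finset.sum_insert hi]
    have hx : x = Pi.single i (x i) + Function.update x i 0 := by
      funext j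
      by_cases hj : j = i
      · subst hj; simp
      · simp [Pi.single_eq_of_ne hj, Function.update_of_ne hj]
    rw [hx]
    refine Set.add_mem_add ⟨x i, abs_le.mp (h1 i), rfl⟩ (ih _ ?_ ?_)
    · intro j
      by_cases hj : j = i
      · subst hj
        simp only [Function.update_self, abs_zero]
        exact le_trans (abs_nonneg (x j)) (h1 j)
      · rw [Function.update_of_ne hj]; exact h1 j
    · intro j hj
      by_cases hji : j = i
      · subst hji; simp
      · rw [Function.update_of_ne hji]
        exact h2 j (by simp [Finset.mem_insert, hji, hj])

lemma iterate {m : ℕ} {K : Set (Fin (m+1) → ℝ)} (hKc : IsCompact K) (hKv : Convex ℝ K)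
    {ρ₀ σ ε : ℝ} (hε : 0 ≤ ε) (hρ₀ : 0 ≤ ρ₀) (hK : K ⊆ cube (m+1) ρ₀)
    (hσ : ρ₀ + (m+1)*ε ≤ σ) (s : Finset (Fin (m+1))) :
    volume (K + ∑ i ∈ s, seg i ε)
      ≤ volume K + s.card • (ENNReal.ofReal (2*ε) * ENNReal.ofReal ((2*σ)^m)) := by
  have hσ0 : 0 ≤ σ := le_trans (by positivity) hσ
  induction s using Finset.induction_on with
  | empty => rw [Finset.sum_empty, add_zero]; simp
  | @insert i s hi ih =>
    rw [Finset.sum_insert hi, add_comm (seg i ε), ← add_assoc]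
    have hsub : K + ∑ i ∈ s, seg i ε ⊆ cube (m+1) σ := by
      refine subset_trans (Set.add_subset_add hK (sum_seg_subset hε s)) ?_
      refine subset_trans cube_add_subset (cube_mono ?_)
      have hcard : (s.card : ℝ) ≤ (m+1 : ℝ) := by
        have := Finset.card_le_univ s
        simp only [Finset.card_univ, Fintype.card_fin] at this
        exact_mod_cast this
      nlinarith [hcard, hε, hσ]
    have hstep := step (hKc.add (sum_seg_compact s)) (hKv.add (sum_seg_convex s)) hε hσ0 hsub i
    calc volume (K + ∑ i ∈ s, seg i ε + seg i ε)
        ≤ volume (K + ∑ i ∈ s, seg i ε)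
            + ENNReal.ofReal (2*ε) * ENNReal.ofReal ((2*σ)^m) := hstep
      _ ≤ (volume K + s.card • (ENNReal.ofReal (2*ε) * ENNReal.ofReal ((2*σ)^m)))
            + ENNReal.ofReal (2*ε) * ENNReal.ofReal ((2*σ)^m) := add_le_add_left ih _
      _ = volume K
            + (insert i s).card • (ENNReal.ofReal (2*ε) * ENNReal.ofReal ((2*σ)^m)) := by
          rw [Finset.card_insert_of_notMem hi, succ_nsmul, ← add_assoc]







section Main

variable {n : ℕ}

local notation "E" => EuclideanSpace ℝ (Fin n)
local notation "ψ" => EuclideanSpace.equiv (Fin n) ℝ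

/-- coordinates are bounded by norm -/
lemma coord_le_norm (x : E) (i : Fin n) : |x i| ≤ ‖x‖ := by
  rw [EuclideanSpace.norm_eq, ← Real.sqrt_sq_eq_abs (x i)]
  apply Real.sqrt_le_sqrt
  have : x i ^ 2 = ‖x i‖ ^ 2 := by rw [Real.norm_eq_abs, sq_abs]
  rw [this]
  exact Finset.single_le_sum (f := fun j => ‖x j‖^2) (fun j _ => by positivity) (Finset.mem_univ i)

lemma applyMat_norm {A : Matrix (Fin n) (Fin n) ℝ}
    (hA : A ∈ Matrix.specialOrthogonalGroup (Fin n) ℝ) (y : E) :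
    ‖applyMat A y‖ = ‖y‖ := by
  have hAo : A ∈ Matrix.orthogonalGroup (Fin n) ℝ :=
    (Matrix.mem_specialOrthogonalGroup_iff.mp hA).1
  have hAtA : A.transpose * A = 1 := by
    have := (Matrix.mem_orthogonalGroup_iff' (n := Fin n) (R := ℝ)).mp hAo
    exact this
  have key : ∀ v : Fin n → ℝ, (A *ᵥ v) ⬝ᵥ (A *ᵥ v) = v ⬝ᵥ v := by
    intro v
    rw [Matrix.dotProduct_mulVec, ← Matrix.mulVec_transpose, Matrix.mulVec_mulVec, hAtA,
      Matrix.one_mulVec]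
  have hd := key (ψ y)
  simp only [dotProduct] at hd
  rw [EuclideanSpace.norm_eq, EuclideanSpace.norm_eq]
  congr 1
  calc ∑ i, ‖applyMat A y i‖ ^ 2 = ∑ i, (A *ᵥ (ψ y)) i * (A *ᵥ (ψ y)) i := by
        apply Finset.sum_congr rfl
        intro i _
        have : applyMat A y i = (A *ᵥ (ψ y)) i := rfl
        rw [this, Real.norm_eq_abs, sq, abs_mul_abs_self]
    _ = ∑ i, (ψ y) i * (ψ y) i := hd
    _ = ∑ i, ‖y i‖ ^ 2 := by
        apply Finset.sum_congr rfl
        intro i _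
        have : (ψ y) i = y i := rfl
        rw [this, Real.norm_eq_abs, sq, abs_mul_abs_self]

end Main

set_option maxHeartbeats 2000000 in
theorem main {m : ℕ} (M : Set (EuclideanSpace ℝ (Fin (m+1))))
    (hne : M.Nonempty) (hcpt : IsCompact M) (hconv : Convex ℝ M) :
    ∃ L : ℝ, 0 ≤ L ∧ ∀ R R' : Matrix.specialOrthogonalGroup (Fin (m+1)) ℝ,
      |ExVol M (R : Matrix (Fin (m+1)) (Fin (m+1)) ℝ)
          - ExVol M (R' : Matrix (Fin (m+1)) (Fin (m+1)) ℝ)| ≤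
        L * ‖(Matrix.toEuclideanLin
          ((R : Matrix (Fin (m+1)) (Fin (m+1)) ℝ)
            - (R' : Matrix (Fin (m+1)) (Fin (m+1)) ℝ))).toContinuousLinearMap‖ := by
  classical
  obtain ⟨ρ, hρ, hMρ⟩ := hcpt.isBounded.subset_closedBall_lt 0 0
  set ψ' := EuclideanSpace.equiv (Fin (m+1)) ℝ with hψ'
  set exset := fun A : Matrix (Fin (m+1)) (Fin (m+1)) ℝ =>
    {p : EuclideanSpace ℝ (Fin (m+1)) | ∃ x ∈ M, ∃ y ∈ M, p = x - applyMat A y} with hexset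
  have hExVol : ∀ A, ExVol M A = (volume (exset A)).toReal := fun A => rfl
  have h_applyMat_cont : ∀ A : Matrix (Fin (m+1)) (Fin (m+1)) ℝ, Continuous (applyMat A) := by
    intro A
    show Continuous fun y => (EuclideanSpace.equiv (Fin (m+1)) ℝ).symm
      (A *ᵥ ((EuclideanSpace.equiv (Fin (m+1)) ℝ) y))
    have h1 : Continuous fun v : Fin (m+1) → ℝ => A *ᵥ v := by
      have := LinearMap.continuous_of_finiteDimensional (A.mulVecLin)
      simpa [Matrix.coe_mulVecLin] using this
    exact (EuclideanSpace.equiv (Fin (m+1)) ℝ).symm.continuous.comp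
      (h1.comp (EuclideanSpace.equiv (Fin (m+1)) ℝ).continuous)
  have h_img : ∀ A, exset A
      = (fun q : EuclideanSpace ℝ (Fin (m+1)) × EuclideanSpace ℝ (Fin (m+1)) =>
          q.1 - applyMat A q.2) '' (M ×ˢ M) := by
    intro A
    ext p
    constructor
    · rintro ⟨x, hx, y, hy, rfl⟩
      exact ⟨(x, y), ⟨hx, hy⟩, rfl⟩
    · rintro ⟨⟨x, y⟩, ⟨hx, hy⟩, rfl⟩
      exact ⟨x, hx, y, hy, rfl⟩
  have h_cpt : ∀ A, IsCompact (exset A) := by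
    intro A
    rw [h_img A]
    exact (hcpt.prod hcpt).image (continuous_fst.sub ((h_applyMat_cont A).comp continuous_snd))
  have h_cvx : ∀ A, Convex ℝ (exset A) := by
    intro A p₁ hp₁ p₂ hp₂ a b ha hb hab
    obtain ⟨x₁, hx₁, y₁, hy₁, rfl⟩ := hp₁
    obtain ⟨x₂, hx₂, y₂, hy₂, rfl⟩ := hp₂
    refine ⟨a•x₁+b•x₂, hconv hx₁ hx₂ ha hb hab, a•y₁+b•y₂, hconv hy₁ hy₂ ha hb hab, ?_⟩
    have happ : applyMat A (a•y₁+b•y₂) = a • applyMat A y₁ + b • applyMat A y₂ := by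
      show (EuclideanSpace.equiv (Fin (m+1)) ℝ).symm _ = _
      rw [map_add, _root_.map_smul, _root_.map_smul, Matrix.mulVec_add, Matrix.mulVec_smul,
        Matrix.mulVec_smul, map_add, _root_.map_smul, _root_.map_smul]
      rfl
    rw [happ]
    module
  have h_fin : ∀ A, volume (exset A) ≠ ⊤ := fun A => ((h_cpt A).measure_lt_top).ne
  have hψvol : ∀ A, volume (⇑ψ' '' exset A) = volume (exset A) := by
    intro A
    have hmeq : ⇑(MeasurableEquiv.toLp 2 (Fin (m+1) → ℝ)).symm = ⇑ψ' := rfl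
    rw [← hmeq, MeasurableEquiv.image_eq_preimage_symm]
    exact (MeasurePreserving.symm _
      (EuclideanSpace.volume_preserving_symm_measurableEquiv_toLp (Fin (m+1)))).measure_preimage
      ((h_cpt A).isClosed.measurableSet).nullMeasurableSet
  have hψ_cpt : ∀ A, IsCompact (⇑ψ' '' exset A) := fun A => (h_cpt A).image ψ'.continuous
  have hψ_cvx : ∀ A, Convex ℝ (⇑ψ' '' exset A) := by
    intro A
    have := (h_cvx A).linear_image (ψ'.toLinearEquiv.toLinearMap)
    exact this
  have hsub : ∀ A : Matrix (Fin (m+1)) (Fin (m+1)) ℝ, A ∈ Matrix.specialOrthogonalGroup (Fin (m+1)) ℝ →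
      ⇑ψ' '' exset A ⊆ cube (m+1) (2*ρ) := by
    rintro A hA q ⟨p, ⟨x, hx, y, hy, rfl⟩, rfl⟩ j _
    have hxn : ‖x‖ ≤ ρ := by
      have := hMρ hx; rwa [Metric.mem_closedBall, dist_zero_right] at this
    have hyn : ‖y‖ ≤ ρ := by
      have := hMρ hy; rwa [Metric.mem_closedBall, dist_zero_right] at this
    have hpq : ψ' (x - applyMat A y) j = (x - applyMat A y) j := rfl
    have habs : |(x - applyMat A y) j| ≤ 2*ρ := by
      refine le_trans (coord_le_norm _ j) ?_
      refine le_trans (norm_sub_le _ _) ?_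
      rw [applyMat_norm hA]
      linarith
    rw [hpq]
    simp only [mem_Icc]
    have := abs_le.mp habs
    exact ⟨by linarith [this.1], this.2⟩
  set σ' := 2*ρ + (m+1)*ρ with hσ'
  have hσ'0 : 0 ≤ σ' := by nlinarith [hρ]
  set L₁ := (m+1 : ℝ) * (2*ρ) * (2*σ')^m with hL₁
  have hL₁0 : 0 ≤ L₁ := by
    apply mul_nonneg (mul_nonneg (by positivity) (by linarith))
    apply pow_nonneg; linarith
  have hVfin : volume (cube (m+1) (2*ρ)) ≠ ⊤ := by
    rw [cube, volume_pi_pi]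
    simp only [Real.volume_Icc]
    rw [Finset.prod_const, Finset.card_univ, Fintype.card_fin]
    exact ENNReal.pow_ne_top ENNReal.ofReal_ne_top
  set Vmax := (volume (cube (m+1) (2*ρ))).toReal with hVmax
  set L := max L₁ Vmax with hL
  have hkey : ∀ R R' : Matrix.specialOrthogonalGroup (Fin (m+1)) ℝ,
      ExVol M (R' : Matrix (Fin (m+1)) (Fin (m+1)) ℝ)
        - ExVol M (R : Matrix (Fin (m+1)) (Fin (m+1)) ℝ) ≤
      L * ‖(Matrix.toEuclideanLin
        ((R : Matrix (Fin (m+1)) (Fin (m+1)) ℝ)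
          - (R' : Matrix (Fin (m+1)) (Fin (m+1)) ℝ))).toContinuousLinearMap‖ := by
    intro R R'
    set T := (Matrix.toEuclideanLin
      ((R : Matrix (Fin (m+1)) (Fin (m+1)) ℝ)
        - (R' : Matrix (Fin (m+1)) (Fin (m+1)) ℝ))).toContinuousLinearMap with hT
    set δ := ‖T‖ with hδ
    have hδ0 : 0 ≤ δ := norm_nonneg T
    have hTapp : ∀ y, T y = applyMat (R : Matrix (Fin (m+1)) (Fin (m+1)) ℝ) y
        - applyMat (R' : Matrix (Fin (m+1)) (Fin (m+1)) ℝ) y := by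
      intro y
      show (Matrix.toEuclideanLin _) y = _
      rw [Matrix.toEuclideanLin_apply, Matrix.sub_mulVec]
      rfl
    have hincl : ⇑ψ' '' exset (R' : Matrix (Fin (m+1)) (Fin (m+1)) ℝ)
        ⊆ ⇑ψ' '' exset (R : Matrix (Fin (m+1)) (Fin (m+1)) ℝ) + ∑ i, seg i (δ * ρ) := by
      rintro q ⟨p, ⟨x, hx, y, hy, rfl⟩, rfl⟩
      have hyn : ‖y‖ ≤ ρ := by
        have := hMρ hy; rwa [Metric.mem_closedBall, dist_zero_right] at this
      have hw : x - applyMat (R' : Matrix (Fin (m+1)) (Fin (m+1)) ℝ) y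
          = (x - applyMat (R : Matrix (Fin (m+1)) (Fin (m+1)) ℝ) y) + T y := by
        rw [hTapp]; abel
      rw [hw, map_add]
      refine Set.add_mem_add (Set.mem_image_of_mem _ ⟨x, hx, y, hy, rfl⟩) ?_
      refine mem_sum_seg Finset.univ _ ?_ (fun j hj => absurd (Finset.mem_univ j) hj)
      intro j
      have h1 : ψ' (T y) j = (T y) j := rfl
      rw [h1]
      refine le_trans (coord_le_norm _ j) (le_trans (T.le_opNorm y) ?_)
      exact mul_le_mul_of_nonneg_left hyn hδ0
    by_cases hδ1 : δ ≤ 1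
    · have hiter := iterate (hψ_cpt _) (hψ_cvx _) (mul_nonneg hδ0 (le_of_lt hρ))
        (by linarith : (0:ℝ) ≤ 2*ρ) (hsub _ R.2)
        (show 2*ρ + (m+1)*(δ*ρ) ≤ σ' by
          rw [hσ']
          nlinarith [mul_nonneg (mul_nonneg (by positivity : (0:ℝ) ≤ (m:ℝ)+1)
            (le_of_lt hρ)) (by linarith : (0:ℝ) ≤ 1 - δ)]) Finset.univ
      have hcard : (Finset.univ : Finset (Fin (m+1))).card = m+1 := by simp
      have hconst : (m+1) • (ENNReal.ofReal (2*(δ*ρ)) * ENNReal.ofReal ((2*σ')^m))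
          = ENNReal.ofReal (L₁ * δ) := by
        rw [← ENNReal.ofReal_mul (by nlinarith [hρ, hδ0] : (0:ℝ) ≤ 2*(δ*ρ)),
          nsmul_eq_mul, ← ENNReal.ofReal_natCast (m+1),
          ← ENNReal.ofReal_mul (by positivity)]
        congr 1
        rw [hL₁]
        push_cast
        ring
      rw [hcard, hconst] at hiter
      have hbound : volume (⇑ψ' '' exset (R' : Matrix (Fin (m+1)) (Fin (m+1)) ℝ))
          ≤ volume (⇑ψ' '' exset (R : Matrix (Fin (m+1)) (Fin (m+1)) ℝ))
            + ENNReal.ofReal (L₁ * δ) :=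
        le_trans (measure_mono hincl) hiter
      have hfinR : volume (⇑ψ' '' exset (R : Matrix (Fin (m+1)) (Fin (m+1)) ℝ)) ≠ ⊤ := by
        rw [hψvol]; exact h_fin _
      have hfin2 : volume (⇑ψ' '' exset (R : Matrix (Fin (m+1)) (Fin (m+1)) ℝ))
          + ENNReal.ofReal (L₁ * δ) ≠ ⊤ :=
        ENNReal.add_ne_top.mpr ⟨hfinR, ENNReal.ofReal_ne_top⟩
      have hmain : ExVol M (R' : Matrix (Fin (m+1)) (Fin (m+1)) ℝ)
          ≤ ExVol M (R : Matrix (Fin (m+1)) (Fin (m+1)) ℝ) + L₁ * δ := by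
        rw [hExVol, hExVol, ← hψvol, ← hψvol]
        calc (volume (⇑ψ' '' exset (R' : Matrix (Fin (m+1)) (Fin (m+1)) ℝ))).toReal
            ≤ (volume (⇑ψ' '' exset (R : Matrix (Fin (m+1)) (Fin (m+1)) ℝ))
              + ENNReal.ofReal (L₁ * δ)).toReal := ENNReal.toReal_mono hfin2 hbound
          _ = _ := by
            rw [ENNReal.toReal_add hfinR ENNReal.ofReal_ne_top,
              ENNReal.toReal_ofReal (mul_nonneg hL₁0 hδ0)]
      have hLd : L₁ * δ ≤ L * δ := mul_le_mul_of_nonneg_right (le_max_left _ _) hδ0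
      linarith
    · push_neg at hδ1
      have hub : ExVol M (R' : Matrix (Fin (m+1)) (Fin (m+1)) ℝ) ≤ Vmax := by
        rw [hExVol, ← hψvol]
        exact ENNReal.toReal_mono hVfin (measure_mono (hsub _ R'.2))
      have h0 : 0 ≤ ExVol M (R : Matrix (Fin (m+1)) (Fin (m+1)) ℝ) := ENNReal.toReal_nonneg
      have hV0 : 0 ≤ Vmax := ENNReal.toReal_nonneg
      have h1 : Vmax ≤ Vmax * δ := le_mul_of_one_le_right hV0 (le_of_lt hδ1)
      have h2 : Vmax * δ ≤ L * δ := mul_le_mul_of_nonneg_right (le_max_right _ _) hδ0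
      linarith
  refine ⟨L, le_trans hL₁0 (le_max_left _ _), fun R R' => ?_⟩
  rw [abs_sub_le_iff]
  constructor
  · have h := hkey R' R
    have hsymn : ‖(Matrix.toEuclideanLin
        ((R' : Matrix (Fin (m+1)) (Fin (m+1)) ℝ)
          - (R : Matrix (Fin (m+1)) (Fin (m+1)) ℝ))).toContinuousLinearMap‖
        = ‖(Matrix.toEuclideanLin
        ((R : Matrix (Fin (m+1)) (Fin (m+1)) ℝ)
          - (R' : Matrix (Fin (m+1)) (Fin (m+1)) ℝ))).toContinuousLinearMap‖ := by
      have hns : (R' : Matrix (Fin (m+1)) (Fin (m+1)) ℝ)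
          - (R : Matrix (Fin (m+1)) (Fin (m+1)) ℝ)
        = -((R : Matrix (Fin (m+1)) (Fin (m+1)) ℝ)
          - (R' : Matrix (Fin (m+1)) (Fin (m+1)) ℝ)) := (neg_sub _ _).symm
      rw [hns, map_neg, map_neg, norm_neg]
    rwa [hsymn] at h
  · exact hkey R R'

end ExVolAux

end ExVolAux

theorem stmt19 {n : ℕ} (M : Set (EuclideanSpace ℝ (Fin n)))
    (hne : M.Nonempty) (hcpt : IsCompact M) (hconv : Convex ℝ M) :
    ∃ L : ℝ, 0 ≤ L ∧ ∀ R R' : Matrix.specialOrthogonalGroup (Fin n) ℝ,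
      |ExVol M (R : Matrix (Fin n) (Fin n) ℝ) - ExVol M (R' : Matrix (Fin n) (Fin n) ℝ)| ≤
        L * ‖(Matrix.toEuclideanLin
          ((R : Matrix (Fin n) (Fin n) ℝ) - (R' : Matrix (Fin n) (Fin n) ℝ))).toContinuousLinearMap‖ := by
  cases n with
  | zero =>
    refine ⟨0, le_rfl, fun R R' => ?_⟩
    have hRR : (R : Matrix (Fin 0) (Fin 0) ℝ) = (R' : Matrix (Fin 0) (Fin 0) ℝ) :=
      Subsingleton.elim _ _
    rw [hRR, sub_self, abs_zero, zero_mul]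
  | succ m => exact ExVolAux.main M hne hcpt hconv
end
end
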